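/- Quantitative subject reduction: let π = Δ ⊢ M : α. (1) If M → N without using +-reductions, then there is π′ = Δ ⊢ N : α with |π′| = |π| − 1. (2) If M reduces by a +-reduction to N₁ and to N₂ (the two contracta of a + redex), then there is π′ with either π′ = Δ ⊢ N₁ : α or π′ = Δ ⊢ N₂ : α, and |π′| = |π| − 1. -/

import Mathlib

-- Computational and parallel types
mutual
  inductive CTy : Type
    | one : CTy
    | tens : CTy → CTy → CTy
    | arr : CTy → PTy → CTy
  inductive PTy : Type
    | ofC : CTy → PTy
    | par : PTy → PTy → PTy
end

-- Type equivalence: AC of ⊗ and ⅋, 1 neutral for ⊗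
mutual
  inductive CEq : CTy → CTy → Prop
    | refl (τ) : CEq τ τ
    | symm : CEq τ ρ → CEq ρ τ
    | trans : CEq τ ρ → CEq ρ σ → CEq τ σ
    | comm (τ ρ) : CEq (.tens τ ρ) (.tens ρ τ)
    | assoc (τ ρ σ) : CEq (.tens (.tens τ ρ) σ) (.tens τ (.tens ρ σ))
    | unit (τ) : CEq (.tens τ .one) τ
    | tensCongr : CEq τ τ' → CEq ρ ρ' → CEq (.tens τ ρ) (.tens τ' ρ')
    | arrCongr : CEq τ τ' → PEq α α' → CEq (.arr τ α) (.arr τ' α')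
  inductive PEq : PTy → PTy → Prop
    | refl (α) : PEq α α
    | symm : PEq α β → PEq β α
    | trans : PEq α β → PEq β γ → PEq α γ
    | comm (α β) : PEq (.par α β) (.par β α)
    | assoc (α β γ) : PEq (.par (.par α β) γ) (.par α (.par β γ))
    | parCongr : PEq α α' → PEq β β' → PEq (.par α β) (.par α' β')
    | ofC : CEq τ τ' → PEq (.ofC τ) (.ofC τ')
end

def Ctx : Type := ℕ → CTy
def Ctx.empty : Ctx := fun _ => CTy.one
def Ctx.tens (Γ Δ : Ctx) : Ctx := fun n => CTy.tens (Γ n) (Δ n)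
def Ctx.single (x : ℕ) (τ : CTy) : Ctx := fun n => if n = x then τ else CTy.one
def Ctx.cons (τ : CTy) (Γ : Ctx) : Ctx := fun n =>
  match n with
  | 0 => τ
  | n+1 => Γ n
def CtxEq (Γ Δ : Ctx) : Prop := ∀ n, CEq (Γ n) (Δ n)

def tensList (l : List CTy) : CTy := l.foldr CTy.tens CTy.one
def tensFin (n : ℕ) (f : Fin n → CTy) : CTy := tensList (List.ofFn f)
def tensCtxFin (n : ℕ) (Δ : Fin n → Ctx) : Ctx := fun x => tensFin n (fun i => Δ i x)

def parList : List PTy → PTy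
  | [] => PTy.ofC CTy.one
  | [α] => α
  | α :: β :: rest => PTy.par α (parList (β :: rest))

def parFin (n : ℕ) (f : Fin n → PTy) : PTy := parList (List.ofFn f)

/-- ⅋ᵏ1 : the par of k copies of 1 (left associated); junk value at 0. -/
def parOnes : ℕ → PTy
  | 0 => PTy.ofC CTy.one
  | 1 => PTy.ofC CTy.one
  | n+2 => PTy.par (parOnes (n+1)) (PTy.ofC CTy.one)

/-- Terms of Λ₊∥ in de Bruijn notation. -/
inductive Tm : Type
  | var : ℕ → Tm
  | lam : Tm → Tm
  | app : Tm → Tm → Tm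
  | plus : Tm → Tm → Tm
  | par : Tm → Tm → Tm

def IsValue : Tm → Prop
  | .var _ => True
  | .lam _ => True
  | _ => False

def IsPar : Tm → Prop
  | .par _ _ => True
  | _ => False

def shiftTm (c : ℕ) : Tm → Tm
  | .var n => if n < c then .var n else .var (n+1)
  | .lam M => .lam (shiftTm (c+1) M)
  | .app M N => .app (shiftTm c M) (shiftTm c N)
  | .plus M N => .plus (shiftTm c M) (shiftTm c N)
  | .par M N => .par (shiftTm c M) (shiftTm c N)

/-- Capture-avoiding substitution `M[V/k]` (de Bruijn). -/
def substTm : Tm → ℕ → Tm → Tm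
  | .var n, k, V => if n = k then V else if k < n then .var (n-1) else .var n
  | .lam M, k, V => .lam (substTm M (k+1) (shiftTm 0 V))
  | .app M N, k, V => .app (substTm M k V) (substTm N k V)
  | .plus M N, k, V => .plus (substTm M k V) (substTm N k V)
  | .par M N, k, V => .par (substTm M k V) (substTm N k V)

def closedUnder : ℕ → Tm → Prop
  | d, .var n => n < d
  | d, .lam M => closedUnder (d+1) M
  | d, .app M N => closedUnder d M ∧ closedUnder d N
  | d, .plus M N => closedUnder d M ∧ closedUnder d N
  | d, .par M N => closedUnder d M ∧ closedUnder d N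

def Closed (M : Tm) : Prop := closedUnder 0 M

/-- One-step reduction; the boolean flag records whether a +-reduction is used. -/
inductive Step : Bool → Tm → Tm → Prop
  | beta {M V} : IsValue V → Step false (.app (.lam M) V) (substTm M 0 V)
  | plusL (M N) : Step true (.plus M N) M
  | plusR (M N) : Step true (.plus M N) N
  | parAppL (M N P) : Step false (.app (.par M N) P) (.par (.app M P) (.app N P))
  | parAppR {V} (M N) : IsValue V → Step false (.app V (.par M N)) (.par (.app V M) (.app V N))
  | parL {b M M'} (N) : Step b M M' → Step b (.par M N) (.par M' N)
  | parR {b N N'} (M) : Step b N N' → Step b (.par M N) (.par M N')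
  | appL {b M M'} (N) : Step b M M' → ¬ IsPar M → Step b (.app M N) (.app M' N)
  | appR {b M M' V} : IsValue V → Step b M M' → ¬ IsPar M → Step b (.app V M) (.app V M')

/-- The two contracta of a single +-redex, reduced in context. -/
inductive PlusPair : Tm → Tm → Tm → Prop
  | base (M N) : PlusPair (.plus M N) M N
  | parL {M M₁ M₂} (N) : PlusPair M M₁ M₂ → PlusPair (.par M N) (.par M₁ N) (.par M₂ N)
  | parR {N N₁ N₂} (M) : PlusPair N N₁ N₂ → PlusPair (.par M N) (.par M N₁) (.par M N₂)
  | appL {M M₁ M₂} (N) : PlusPair M M₁ M₂ → ¬ IsPar M → PlusPair (.app M N) (.app M₁ N) (.app M₂ N)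
  | appR {M M₁ M₂ V} : IsValue V → PlusPair M M₁ M₂ → ¬ IsPar M → PlusPair (.app V M) (.app V M₁) (.app V M₂)

/-- n-step reduction. -/
inductive Steps : ℕ → Tm → Tm → Prop
  | refl (M) : Steps 0 M M
  | head {b M N P n} : Step b M N → Steps n N P → Steps (n+1) M P

/-- A closed term converges iff it reduces to a parallel composition of values. -/
def Converges (M : Tm) : Prop :=
  ∃ (n : ℕ) (V : Tm) (Vs : List Tm), IsValue V ∧ (∀ W ∈ Vs, IsValue W) ∧
    Steps n M (Vs.foldl Tm.par V)

/-- Typing derivations, indexed by the measure |π|. -/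
inductive Deriv : Ctx → Tm → PTy → ℕ → Prop
  | ax (x : ℕ) (τ : CTy) : Deriv (Ctx.single x τ) (.var x) (.ofC τ) 0
  | lamI (n : ℕ) (Δ : Fin n → Ctx) (τ : Fin n → CTy) (α : Fin n → PTy) (ms : Fin n → ℕ)
      (M : Tm) :
      (∀ i, Deriv (Ctx.cons (τ i) (Δ i)) M (α i) (ms i)) →
      Deriv (tensCtxFin n Δ) (.lam M)
        (.ofC (tensFin n (fun i => .arr (τ i) (α i)))) (∑ i, ms i)
  | appE (k : ℕ) (hk : 0 < k) (nf : Fin k → ℕ) (hn : ∀ i, 0 < nf i)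
      (τ : ∀ i : Fin k, Fin (nf i) → CTy) (α : ∀ i : Fin k, Fin (nf i) → PTy)
      (Δ : Ctx) (Γ : Fin k → Ctx) (m0 : ℕ) (ms : Fin k → ℕ) (M N : Tm) :
      Deriv Δ M (parFin k (fun i => .ofC (tensFin (nf i) (fun j => .arr (τ i j) (α i j))))) m0 →
      (∀ i, Deriv (Γ i) N (parFin (nf i) (fun j => .ofC (τ i j))) (ms i)) →
      Deriv (Ctx.tens Δ (tensCtxFin k Γ)) (.app M N)
        (parFin k (fun i => parFin (nf i) (α i)))
        ((m0 + (∑ i, ms i) + (∑ i, 2 * nf i)) - 1)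
  | plusL {Δ M α m} (N) : Deriv Δ M α m → Deriv Δ (.plus M N) α (m+1)
  | plusR {Δ N α m} (M) : Deriv Δ N α m → Deriv Δ (.plus M N) α (m+1)
  | parI {Δ Γ M N α β m m'} : Deriv Δ M α m → Deriv Γ N β m' →
      Deriv (Ctx.tens Δ Γ) (.par M N) (.par α β) (m + m')
  | eqv {Γ Γ' M α α' m} : Deriv Γ M α m → CtxEq Γ Γ' → PEq α α' → Deriv Γ' M α' m

def deltaTm : Tm := .lam (.app (.var 0) (.var 0))
def OmegaTm : Tm := .app deltaTm deltaTm
def Idt : Tm := .lam (.var 0)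
def dstarTm : Tm := .lam (.lam (.app (.var 1) (.var 1)))
def YstarTm : Tm := .app dstarTm dstarTm


/-! ### Auxiliary infrastructure for subject reduction -/

section SRAux

open List

-- Context equivalence helpers
theorem ctxEq_refl (Γ : Ctx) : CtxEq Γ Γ := fun _ => CEq.refl _
theorem ctxEq_symm {Γ Δ} (h : CtxEq Γ Δ) : CtxEq Δ Γ := fun n => (h n).symm
theorem ctxEq_trans {Γ Δ Θ} (h : CtxEq Γ Δ) (h' : CtxEq Δ Θ) : CtxEq Γ Θ :=
  fun n => (h n).trans (h' n)
theorem ctxEq_tens {Γ Γ' Δ Δ'} (h : CtxEq Γ Γ') (h' : CtxEq Δ Δ') :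
    CtxEq (Ctx.tens Γ Δ) (Ctx.tens Γ' Δ') := fun n => CEq.tensCongr (h n) (h' n)
theorem ctxEq_of_eq {Γ Δ : Ctx} (h : ∀ n, Γ n = Δ n) : CtxEq Γ Δ := fun n => h n ▸ CEq.refl _

theorem cEq_unitL (τ : CTy) : CEq (CTy.tens CTy.one τ) τ := (CEq.comm _ _).trans (CEq.unit τ)

theorem cEq_interchange (a b c d : CTy) :
    CEq (CTy.tens (CTy.tens a b) (CTy.tens c d)) (CTy.tens (CTy.tens a c) (CTy.tens b d)) := by
  refine (CEq.assoc a b (CTy.tens c d)).trans (CEq.trans ?_ (CEq.assoc a c (CTy.tens b d)).symm)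
  refine CEq.tensCongr (CEq.refl a) ?_
  refine CEq.trans ?_ (CEq.assoc c b d)
  refine (CEq.assoc b c d).symm.trans (CEq.tensCongr (CEq.comm b c) (CEq.refl d))

theorem ctxEq_interchange (A B C D : Ctx) :
    CtxEq (Ctx.tens (Ctx.tens A B) (Ctx.tens C D)) (Ctx.tens (Ctx.tens A C) (Ctx.tens B D)) :=
  fun n => cEq_interchange _ _ _ _

/-! ### Permutations up to a relation -/

def PermRel {X : Type*} (R : X → X → Prop) (l l' : List X) : Prop :=
  ∃ m, List.Forall₂ R l m ∧ m.Perm l'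

variable {X : Type*} {R : X → X → Prop}

theorem forall₂_flip' (hR : ∀ a b, R a b → R b a) :
    ∀ {l m : List X}, List.Forall₂ R l m → List.Forall₂ R m l := by
  intro l m h
  induction h with
  | nil => exact .nil
  | cons h _ ih => exact .cons (hR _ _ h) ih

theorem forall₂_comp (hR : ∀ a b c, R a b → R b c → R a c) :
    ∀ {l m k : List X}, List.Forall₂ R l m → List.Forall₂ R m k → List.Forall₂ R l k := by
  intro l m k h
  induction h generalizing k with
  | nil => intro h'; rw [List.forall₂_nil_left_iff] at h'; subst h'; exact .nil
  | cons h₁ h₂ ih =>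
    intro h'
    rw [List.forall₂_cons_left_iff] at h'
    obtain ⟨b, u, hr, hf, rfl⟩ := h'
    exact .cons (hR _ _ _ h₁ hr) (ih hf)

theorem forall₂_exchange {l l' : List X} (p : l.Perm l') :
    ∀ {m}, List.Forall₂ R l' m → ∃ m', List.Forall₂ R l m' ∧ m'.Perm m := by
  induction p with
  | nil =>
    intro m h; rw [List.forall₂_nil_left_iff] at h; subst h; exact ⟨[], .nil, .nil⟩
  | cons x p ih =>
    intro m h
    rw [List.forall₂_cons_left_iff] at h
    obtain ⟨b, u, hr, hf, rfl⟩ := h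
    obtain ⟨m', hf', hp⟩ := ih hf
    exact ⟨b :: m', .cons hr hf', hp.cons b⟩
  | swap x y l =>
    intro m h
    rw [List.forall₂_cons_left_iff] at h
    obtain ⟨b, u, hr, h, rfl⟩ := h
    rw [List.forall₂_cons_left_iff] at h
    obtain ⟨c, u', hr', hf, rfl⟩ := h
    exact ⟨c :: b :: u', .cons hr' (.cons hr hf), List.Perm.swap b c u'⟩
  | trans p₁ p₂ ih₁ ih₂ =>
    intro m h
    obtain ⟨m₁, hf₁, hp₁⟩ := ih₂ h
    obtain ⟨m₂, hf₂, hp₂⟩ := ih₁ hf₁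
    exact ⟨m₂, hf₂, hp₂.trans hp₁⟩

theorem PermRel.length_eq {l l'} (h : PermRel R l l') : l.length = l'.length := by
  obtain ⟨m, hf, hp⟩ := h
  exact hf.length_eq.trans hp.length_eq

theorem PermRel.of_forall₂ {l l'} (h : List.Forall₂ R l l') : PermRel R l l' :=
  ⟨l', h, .refl _⟩

theorem permRel_refl (hR : ∀ x ∈ l, R x x) : PermRel R l l :=
  ⟨l, List.forall₂_same.2 hR, .refl _⟩

theorem PermRel.of_perm {l l' : List X} (hR : ∀ x ∈ l, R x x) (p : l.Perm l') : PermRel R l l' :=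
  ⟨l, List.forall₂_same.2 hR, p⟩

theorem PermRel.perm_right {l l' l''} (h : PermRel R l l') (p : l'.Perm l'') : PermRel R l l'' := by
  obtain ⟨m, hf, hp⟩ := h; exact ⟨m, hf, hp.trans p⟩

theorem PermRel.trans' (hR : ∀ a b c, R a b → R b c → R a c) {l₁ l₂ l₃}
    (h : PermRel R l₁ l₂) (h' : PermRel R l₂ l₃) : PermRel R l₁ l₃ := by
  obtain ⟨m, hf, hp⟩ := h
  obtain ⟨m', hf', hp'⟩ := h'
  obtain ⟨m'', hf'', hp''⟩ := forall₂_exchange hp hf'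
  exact ⟨m'', forall₂_comp hR hf hf'', hp''.trans hp'⟩

theorem PermRel.symm' (hR : ∀ a b, R a b → R b a) {l₁ l₂}
    (h : PermRel R l₁ l₂) : PermRel R l₂ l₁ := by
  obtain ⟨m, hf, hp⟩ := h
  obtain ⟨m', hf', hp'⟩ := forall₂_exchange hp.symm (forall₂_flip' hR hf)
  exact ⟨m', hf', hp'⟩

theorem PermRel.append {l₁ l₂ l₁' l₂' : List X}
    (h : PermRel R l₁ l₁') (h' : PermRel R l₂ l₂') : PermRel R (l₁ ++ l₂) (l₁' ++ l₂') := by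
  obtain ⟨m, hf, hp⟩ := h
  obtain ⟨m', hf', hp'⟩ := h'
  exact ⟨m ++ m', List.rel_append hf hf', hp.append hp'⟩

theorem forall₂_append_split : ∀ {l₁ l₂ m : List X}, List.Forall₂ R (l₁ ++ l₂) m →
    ∃ m₁ m₂, m = m₁ ++ m₂ ∧ List.Forall₂ R l₁ m₁ ∧ List.Forall₂ R l₂ m₂ := by
  intro l₁
  induction l₁ with
  | nil => intro l₂ m h; exact ⟨[], m, rfl, .nil, h⟩
  | cons a l₁ ih =>
    intro l₂ m h
    rw [List.cons_append, List.forall₂_cons_left_iff] at h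
    obtain ⟨b, u, hr, hf, rfl⟩ := h
    obtain ⟨m₁, m₂, rfl, hf₁, hf₂⟩ := ih hf
    exact ⟨b :: m₁, m₂, rfl, .cons hr hf₁, hf₂⟩

theorem permRel_split {l₁ l₂ L : List X} (h : PermRel R (l₁ ++ l₂) L) :
    ∃ L₁ L₂, L.Perm (L₁ ++ L₂) ∧ List.Forall₂ R l₁ L₁ ∧ List.Forall₂ R l₂ L₂ := by
  obtain ⟨m, hf, hp⟩ := h
  obtain ⟨m₁, m₂, rfl, hf₁, hf₂⟩ := forall₂_append_split hf
  exact ⟨m₁, m₂, hp.symm, hf₁, hf₂⟩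

theorem perm_map_extract {A B : Type*} (f : A → B) :
    ∀ {l₀ l : List B}, l₀.Perm l → ∀ {s : List A}, s.map f = l₀ →
      ∃ s', s.Perm s' ∧ s'.map f = l := by
  intro l₀ l p
  induction p with
  | nil => intro s h; exact ⟨s, .refl _, h⟩
  | @cons x l₁ l₂ p ih =>
    intro s h
    cases s with
    | nil => cases h
    | cons a s₀ =>
      simp only [List.map_cons, List.cons.injEq] at h
      obtain ⟨s₀', hp, hm⟩ := ih h.2
      exact ⟨a :: s₀', hp.cons a, by simp [hm, h.1]⟩
  | @swap x y l =>
    intro s h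
    cases s with
    | nil => cases h
    | cons a s₁ =>
      cases s₁ with
      | nil => simp at h
      | cons b s₀ =>
        simp only [List.map_cons, List.cons.injEq] at h
        exact ⟨b :: a :: s₀, List.Perm.swap b a s₀, by simp [h.1, h.2.1, h.2.2]⟩
  | trans p₁ p₂ ih₁ ih₂ =>
    intro s h
    obtain ⟨s', hp, hm⟩ := ih₁ h
    obtain ⟨s'', hp', hm'⟩ := ih₂ hm
    exact ⟨s'', hp.trans hp', hm'⟩

theorem map_eq_append_split {A B : Type*} {f : A → B} :
    ∀ {s : List A} {L₁ L₂ : List B}, s.map f = L₁ ++ L₂ →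
      ∃ sA sB, s = sA ++ sB ∧ sA.map f = L₁ ∧ sB.map f = L₂ := by
  intro s
  induction s with
  | nil => intro L₁ L₂ h
           rcases List.append_eq_nil_iff.mp h.symm with ⟨rfl, rfl⟩
           exact ⟨[], [], rfl, rfl, rfl⟩
  | cons a s ih =>
    intro L₁ L₂ h
    cases L₁ with
    | nil => exact ⟨[], a :: s, rfl, rfl, by simpa using h⟩
    | cons b L₁ =>
      simp only [List.map_cons, List.cons_append, List.cons.injEq] at h
      obtain ⟨sA, sB, rfl, h1, h2⟩ := ih h.2
      exact ⟨a :: sA, sB, rfl, by simp [h1, h.1], h2⟩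

end SRAux

section SRLeaves

/-! Leaf lists of types -/

def tleaves : CTy → List CTy
  | .one => []
  | .tens a b => tleaves a ++ tleaves b
  | .arr a α => [.arr a α]

def pleaves : PTy → List CTy
  | .ofC τ => [τ]
  | .par a b => pleaves a ++ pleaves b

def ARel : CTy → CTy → Prop := fun σ ρ =>
  match σ, ρ with
  | .arr a α, .arr b β => CEq a b ∧ PEq α β
  | _, _ => False

theorem aRel_symm : ∀ a b, ARel a b → ARel b a := by
  intro a b h
  cases a <;> cases b <;> first
    | exact False.elim h
    | exact ⟨h.1.symm, h.2.symm⟩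

theorem aRel_trans : ∀ a b c, ARel a b → ARel b c → ARel a c := by
  intro a b c h h'
  cases a <;> cases b <;> cases c <;> first
    | exact False.elim h
    | exact False.elim h'
    | exact ⟨h.1.trans h'.1, h.2.trans h'.2⟩

theorem aRel_to_ceq : ∀ {a b}, ARel a b → CEq a b := by
  intro a b h
  cases a <;> cases b <;> first
    | exact False.elim h
    | exact CEq.arrCongr h.1 h.2

theorem mem_tleaves_arr : ∀ (σ : CTy), ∀ x ∈ tleaves σ, ∃ a α, x = CTy.arr a α
  | .one => by simp [tleaves]
  | .tens a b => by
      intro x hx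
      rcases List.mem_append.mp hx with h | h
      · exact mem_tleaves_arr a x h
      · exact mem_tleaves_arr b x h
  | .arr a α => by
      intro x hx
      rw [show tleaves (CTy.arr a α) = [CTy.arr a α] from rfl, List.mem_singleton] at hx
      exact ⟨a, α, hx⟩

theorem aRel_refl_tleaves (σ : CTy) : ∀ x ∈ tleaves σ, ARel x x := by
  intro x hx
  obtain ⟨a, α, rfl⟩ := mem_tleaves_arr σ x hx
  exact ⟨CEq.refl _, PEq.refl _⟩

theorem ceq_tleaves_sound : ∀ {σ ρ}, CEq σ ρ → PermRel ARel (tleaves σ) (tleaves ρ) := by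
  intro σ ρ h
  refine @CEq.rec (fun σ ρ _ => PermRel ARel (tleaves σ) (tleaves ρ))
      (fun α β _ => PermRel CEq (pleaves α) (pleaves β))
      ?_ ?_ ?_ ?_ ?_ ?_ ?_ ?_ ?_ ?_ ?_ ?_ ?_ ?_ ?_ σ ρ h
  · intro τ; exact permRel_refl (aRel_refl_tleaves τ)
  · intro _ _ _ ih; exact PermRel.symm' aRel_symm ih
  · intro _ _ _ _ _ ih ih'; exact PermRel.trans' aRel_trans ih ih'
  · intro τ ρ'
    exact PermRel.of_perm (aRel_refl_tleaves (CTy.tens τ ρ')) List.perm_append_comm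
  · intro τ ρ' σ'
    show PermRel ARel ((tleaves τ ++ tleaves ρ') ++ tleaves σ') _
    rw [List.append_assoc]
    exact permRel_refl (by rw [← List.append_assoc]; exact aRel_refl_tleaves (CTy.tens (CTy.tens τ ρ') σ'))
  · intro τ
    show PermRel ARel (tleaves τ ++ []) _
    rw [List.append_nil]
    exact permRel_refl (aRel_refl_tleaves τ)
  · intro _ _ _ _ _ _ ih ih'; exact PermRel.append ih ih'
  · intro τ τ' α α' h1 h2 _ _
    exact PermRel.of_forall₂ (List.Forall₂.cons ⟨h1, h2⟩ .nil)
  · intro α; exact permRel_refl (fun x _ => CEq.refl x)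
  · intro _ _ _ ih; exact PermRel.symm' (fun _ _ h => h.symm) ih
  · intro _ _ _ _ _ ih ih'; exact PermRel.trans' (fun _ _ _ h h' => h.trans h') ih ih'
  · intro α β
    exact PermRel.of_perm (fun x _ => CEq.refl x) List.perm_append_comm
  · intro α β γ
    show PermRel CEq ((pleaves α ++ pleaves β) ++ pleaves γ) _
    rw [List.append_assoc]
    exact permRel_refl (fun x _ => CEq.refl x)
  · intro _ _ _ _ _ _ ih ih'; exact PermRel.append ih ih'
  · intro τ τ' h _; exact PermRel.of_forall₂ (List.Forall₂.cons h .nil)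

theorem peq_pleaves_sound : ∀ {α β}, PEq α β → PermRel CEq (pleaves α) (pleaves β) := by
  intro α β h
  refine @PEq.rec (fun σ ρ _ => PermRel ARel (tleaves σ) (tleaves ρ))
      (fun α β _ => PermRel CEq (pleaves α) (pleaves β))
      ?_ ?_ ?_ ?_ ?_ ?_ ?_ ?_ ?_ ?_ ?_ ?_ ?_ ?_ ?_ α β h
  · intro τ; exact permRel_refl (aRel_refl_tleaves τ)
  · intro _ _ _ ih; exact PermRel.symm' aRel_symm ih
  · intro _ _ _ _ _ ih ih'; exact PermRel.trans' aRel_trans ih ih'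
  · intro τ ρ'
    exact PermRel.of_perm (aRel_refl_tleaves (CTy.tens τ ρ')) List.perm_append_comm
  · intro τ ρ' σ'
    show PermRel ARel ((tleaves τ ++ tleaves ρ') ++ tleaves σ') _
    rw [List.append_assoc]
    exact permRel_refl (by rw [← List.append_assoc]; exact aRel_refl_tleaves (CTy.tens (CTy.tens τ ρ') σ'))
  · intro τ
    show PermRel ARel (tleaves τ ++ []) _
    rw [List.append_nil]
    exact permRel_refl (aRel_refl_tleaves τ)
  · intro _ _ _ _ _ _ ih ih'; exact PermRel.append ih ih'
  · intro τ τ' α' β' h1 h2 _ _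
    exact PermRel.of_forall₂ (List.Forall₂.cons ⟨h1, h2⟩ .nil)
  · intro α'; exact permRel_refl (fun x _ => CEq.refl x)
  · intro _ _ _ ih; exact PermRel.symm' (fun _ _ h => h.symm) ih
  · intro _ _ _ _ _ ih ih'; exact PermRel.trans' (fun _ _ _ h h' => h.trans h') ih ih'
  · intro α' β'
    exact PermRel.of_perm (fun x _ => CEq.refl x) List.perm_append_comm
  · intro α' β' γ
    show PermRel CEq ((pleaves α' ++ pleaves β') ++ pleaves γ) _
    rw [List.append_assoc]
    exact permRel_refl (fun x _ => CEq.refl x)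
  · intro _ _ _ _ _ _ ih ih'; exact PermRel.append ih ih'
  · intro τ τ' h' _; exact PermRel.of_forall₂ (List.Forall₂.cons h' .nil)

/-! tensList / parList congruence lemmas -/

theorem tensList_cons (a : CTy) (l : List CTy) : tensList (a :: l) = CTy.tens a (tensList l) := rfl

theorem ceq_tensList_append : ∀ (l l' : List CTy),
    CEq (tensList (l ++ l')) (CTy.tens (tensList l) (tensList l'))
  | [], l' => (cEq_unitL _).symm
  | a :: l, l' => by
      simp only [List.cons_append, tensList_cons]
      exact (CEq.tensCongr (CEq.refl a) (ceq_tensList_append l l')).trans (CEq.assoc a _ _).symm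

theorem ceq_tensList_perm {l l' : List CTy} (p : l.Perm l') : CEq (tensList l) (tensList l') := by
  induction p with
  | nil => exact CEq.refl _
  | cons x _ ih => exact CEq.tensCongr (CEq.refl x) ih
  | swap x y l =>
      exact ((CEq.assoc y x _).symm.trans
        (CEq.tensCongr (CEq.comm y x) (CEq.refl _))).trans (CEq.assoc x y _)
  | trans _ _ ih ih' => exact ih.trans ih'

theorem ceq_tensList_forall₂ : ∀ {l l' : List CTy},
    List.Forall₂ CEq l l' → CEq (tensList l) (tensList l') := by
  intro l l' h
  induction h with
  | nil => exact CEq.refl _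
  | cons h _ ih => exact CEq.tensCongr h ih

theorem ceq_tleaves_complete : ∀ (σ : CTy), CEq σ (tensList (tleaves σ))
  | .one => CEq.refl _
  | .tens a b =>
      (CEq.tensCongr (ceq_tleaves_complete a) (ceq_tleaves_complete b)).trans
        (ceq_tensList_append _ _).symm
  | .arr a α => (CEq.unit _).symm

theorem permRel_arel_to_ceq {l l'} (h : PermRel ARel l l') : PermRel CEq l l' := by
  obtain ⟨m, hf, hp⟩ := h
  exact ⟨m, hf.imp (fun _ _ hab => aRel_to_ceq hab), hp⟩

theorem ceq_of_permrel_tleaves {σ : CTy} {l : List CTy} (h : PermRel CEq (tleaves σ) l) :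
    CEq σ (tensList l) := by
  obtain ⟨m, hf, hp⟩ := h
  exact ((ceq_tleaves_complete σ).trans (ceq_tensList_forall₂ hf)).trans (ceq_tensList_perm hp)

theorem parList_cons (a : PTy) {l : List PTy} (h : l ≠ []) :
    parList (a :: l) = PTy.par a (parList l) := by
  cases l with
  | nil => exact absurd rfl h
  | cons b t => rfl

theorem peq_parList_append : ∀ {l l' : List PTy}, l ≠ [] → l' ≠ [] →
    PEq (parList (l ++ l')) (.par (parList l) (parList l')) := by
  intro l
  induction l with
  | nil => intro l' h; exact absurd rfl h
  | cons a l ih =>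
    intro l' _ h'
    cases l with
    | nil =>
      rw [List.singleton_append, parList_cons a h']
      exact PEq.refl _
    | cons b t =>
      have hl : (b :: t : List PTy) ≠ [] := by simp
      have h2 : ((b :: t) ++ l' : List PTy) ≠ [] := by simp
      rw [List.cons_append, parList_cons a h2, parList_cons a hl]
      exact (PEq.parCongr (PEq.refl a) (ih hl h')).trans (PEq.assoc _ _ _).symm

theorem peq_parList_perm : ∀ {l l' : List PTy}, l.Perm l' → PEq (parList l) (parList l') := by
  intro l l' p
  induction p with
  | nil => exact PEq.refl _
  | @cons x l₁ l₂ p ih =>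
    cases l₁ with
    | nil =>
      cases l₂ with
      | nil => exact PEq.refl _
      | cons c t => simpa using p.length_eq
    | cons b t =>
      have h₂ : l₂ ≠ [] := by intro h; subst h; simpa using p.length_eq
      rw [parList_cons x (by simp), parList_cons x h₂]
      exact PEq.parCongr (PEq.refl x) ih
  | @swap x y l =>
    cases l with
    | nil => exact PEq.comm y x
    | cons a t =>
      rw [parList_cons y (by simp), parList_cons x (by simp),
          parList_cons x (by simp), parList_cons y (by simp)]
      exact ((PEq.assoc y x _).symm.trans
        (PEq.parCongr (PEq.comm y x) (PEq.refl _))).trans (PEq.assoc x y _)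
  | trans _ _ ih ih' => exact ih.trans ih'

theorem peq_parList_forall₂ : ∀ {l l' : List PTy},
    List.Forall₂ PEq l l' → PEq (parList l) (parList l') := by
  intro l l' h
  induction h with
  | @cons a b l₁ l₂ hab h ih =>
    cases l₁ with
    | nil =>
      rw [List.forall₂_nil_left_iff] at h
      subst h
      exact hab
    | cons c t =>
      have h₂ : l₂ ≠ [] := by
        intro e; subst e
        rw [List.forall₂_nil_right_iff] at h
        cases h
      rw [parList_cons a (by simp), parList_cons b h₂]
      exact PEq.parCongr hab ih
  | nil => exact PEq.refl _

theorem pleaves_ne_nil : ∀ (α : PTy), pleaves α ≠ []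
  | .ofC τ => by simp [pleaves]
  | .par a b => by simp [pleaves, pleaves_ne_nil a]

theorem forall₂_map_ofC {l m : List CTy} (h : List.Forall₂ CEq l m) :
    List.Forall₂ PEq (l.map PTy.ofC) (m.map PTy.ofC) := by
  induction h with
  | nil => exact .nil
  | cons h _ ih => exact .cons (PEq.ofC h) ih

theorem peq_pleaves_complete : ∀ (α : PTy), PEq α (parList ((pleaves α).map .ofC))
  | .ofC τ => PEq.refl _
  | .par a b => by
      refine (PEq.parCongr (peq_pleaves_complete a) (peq_pleaves_complete b)).trans ?_
      show PEq _ (parList ((pleaves a ++ pleaves b).map PTy.ofC))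
      rw [List.map_append]
      refine (peq_parList_append ?_ ?_).symm
      · simp [pleaves_ne_nil a]
      · simp [pleaves_ne_nil b]

theorem peq_of_permrel_pleaves {α : PTy} {l : List CTy} (h : PermRel CEq (pleaves α) l) :
    PEq α (parList (l.map .ofC)) := by
  obtain ⟨m, hf, hp⟩ := h
  exact ((peq_pleaves_complete α).trans (peq_parList_forall₂ (forall₂_map_ofC hf))).trans
    (peq_parList_perm (hp.map _))

theorem pleaves_parList_ofC : ∀ {l : List CTy}, l ≠ [] →
    pleaves (parList (l.map PTy.ofC)) = l := by
  intro l
  induction l with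
  | nil => intro h; exact absurd rfl h
  | cons a t ih =>
    intro _
    cases t with
    | nil => rfl
    | cons b t' =>
      rw [List.map_cons, parList_cons _ (by simp)]
      show pleaves (PTy.ofC a) ++ pleaves (parList ((b :: t').map PTy.ofC)) = _
      rw [ih (by simp)]
      rfl

theorem perm_singleton_eq {X : Type*} {a b : X} (h : List.Perm [a] [b]) : a = b := by
  have := List.perm_singleton.mp h
  injection this

theorem ceq_of_peq_ofC {σ τ : CTy} (h : PEq (.ofC σ) (.ofC τ)) : CEq σ τ := by
  obtain ⟨m, hf, hp⟩ := peq_pleaves_sound h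
  simp only [pleaves] at hf hp
  rw [List.forall₂_cons_left_iff] at hf
  obtain ⟨b, u, hr, hu, rfl⟩ := hf
  rw [List.forall₂_nil_left_iff] at hu
  subst hu
  rw [perm_singleton_eq hp] at hr
  exact hr

theorem arel_of_singletons {a b : CTy} (h : PermRel ARel [a] [b]) : ARel a b := by
  obtain ⟨m, hf, hp⟩ := h
  rw [List.forall₂_cons_left_iff] at hf
  obtain ⟨c, u, hr, hu, rfl⟩ := hf
  rw [List.forall₂_nil_left_iff] at hu
  subst hu
  rw [perm_singleton_eq hp] at hr
  exact hr

theorem ceq_arr_inv {a b : CTy} {α β : PTy} (h : CEq (.arr a α) (.arr b β)) :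
    CEq a b ∧ PEq α β := by
  have h' := ceq_tleaves_sound h
  exact arel_of_singletons h'

theorem tleaves_nil_of_ceq_one {σ : CTy} (h : CEq σ .one) : tleaves σ = [] := by
  have hl := (ceq_tleaves_sound h).length_eq
  simp only [tleaves, List.length_nil] at hl
  exact List.length_eq_zero_iff.mp hl

theorem tleaves_all_arr_eq : ∀ {l : List CTy}, (∀ x ∈ l, ∃ a α, x = CTy.arr a α) →
    tleaves (tensList l) = l := by
  intro l
  induction l with
  | nil => intro _; rfl
  | cons x t ih =>
    intro h
    obtain ⟨a, α, hx⟩ := h x (by simp)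
    subst hx
    show tleaves (CTy.tens _ (tensList t)) = _
    have := ih (fun y hy => h y (by simp [hy]))
    simp [tleaves, this]

end SRLeaves

section SRSpecs

/-! List-form packaging of the typing rules -/

theorem ofFn_comp_get {A B : Type*} (l : List A) (f : A → B) :
    List.ofFn (fun i => f (l.get i)) = l.map f := by
  conv_rhs => rw [← List.ofFn_get l, List.map_ofFn]
  rfl

def ctxTensList (l : List Ctx) : Ctx := fun x => tensList (l.map (fun Γ => Γ x))

abbrev AppSpec := Ctx × ℕ × List (CTy × PTy)

def specTensor (s : AppSpec) : CTy := tensList (s.2.2.map fun p => .arr p.1 p.2)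
def majorTy (specs : List AppSpec) : PTy := parList (specs.map fun s => .ofC (specTensor s))
def minorTy (s : AppSpec) : PTy := parList (s.2.2.map fun p => .ofC p.1)
def outTy (specs : List AppSpec) : PTy := parList (specs.map fun s => parList (s.2.2.map Prod.snd))
def specsCtx (specs : List AppSpec) : Ctx := ctxTensList (specs.map Prod.fst)
def specsMsSum (specs : List AppSpec) : ℕ := (specs.map fun s => s.2.1).sum
def specsT (specs : List AppSpec) : ℕ := (specs.map fun s => 2 * s.2.2.length).sum

def lamArr (p : Ctx × CTy × PTy × ℕ) : CTy := .arr p.2.1 p.2.2.1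

theorem lamI_list (L : List (Ctx × CTy × PTy × ℕ)) (M : Tm)
    (h : ∀ p ∈ L, Deriv (Ctx.cons p.2.1 p.1) M p.2.2.1 p.2.2.2) :
    Deriv (ctxTensList (L.map Prod.fst)) (.lam M)
      (.ofC (tensList (L.map lamArr))) ((L.map fun p => p.2.2.2).sum) := by
  have hd := Deriv.lamI L.length (fun i => (L.get i).1) (fun i => (L.get i).2.1)
      (fun i => (L.get i).2.2.1) (fun i => (L.get i).2.2.2) M
      (fun i => h _ (L.get_mem _))
  have e1 : tensCtxFin L.length (fun i => (L.get i).1) = ctxTensList (L.map Prod.fst) := by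
    funext x
    show tensList (List.ofFn fun i => (L.get i).1 x) = tensList ((L.map Prod.fst).map fun Γ => Γ x)
    rw [List.map_map]
    exact congrArg tensList (ofFn_comp_get L (fun p => p.1 x))
  have e2 : tensFin L.length (fun i => CTy.arr (L.get i).2.1 (L.get i).2.2.1)
      = tensList (L.map lamArr) :=
    congrArg tensList (ofFn_comp_get L lamArr)
  have e3 : (∑ i, (L.get i).2.2.2) = (L.map fun p => p.2.2.2).sum := by
    rw [← ofFn_comp_get L (fun p => p.2.2.2), List.sum_ofFn]
  rw [e1, e2, e3] at hd
  exact hd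

theorem appE_list (specs : List AppSpec) (hne : specs ≠ []) (harr : ∀ s ∈ specs, s.2.2 ≠ [])
    (Δ : Ctx) (m0 : ℕ) (M N : Tm)
    (hM : Deriv Δ M (majorTy specs) m0)
    (hN : ∀ s ∈ specs, Deriv s.1 N (minorTy s) s.2.1) :
    Deriv (Ctx.tens Δ (specsCtx specs)) (.app M N) (outTy specs)
      (m0 + specsMsSum specs + specsT specs - 1) := by
  have hk : 0 < specs.length := List.length_pos_iff.mpr hne
  have hn : ∀ i : Fin specs.length, 0 < (specs.get i).2.2.length :=
    fun i => List.length_pos_iff.mpr (harr _ (specs.get_mem _))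
  have emaj : parFin specs.length
      (fun i => PTy.ofC (tensFin (specs.get i).2.2.length
        (fun j => CTy.arr ((specs.get i).2.2.get j).1 ((specs.get i).2.2.get j).2)))
      = majorTy specs := by
    refine congrArg parList ?_
    have : ∀ i : Fin specs.length, PTy.ofC (tensFin (specs.get i).2.2.length
        (fun j => CTy.arr ((specs.get i).2.2.get j).1 ((specs.get i).2.2.get j).2))
        = PTy.ofC (specTensor (specs.get i)) := by
      intro i
      exact congrArg PTy.ofC
        (congrArg tensList (ofFn_comp_get (specs.get i).2.2 (fun p => CTy.arr p.1 p.2)))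
    rw [funext this]
    exact ofFn_comp_get specs (fun s => PTy.ofC (specTensor s))
  have emin : ∀ i : Fin specs.length, parFin (specs.get i).2.2.length
      (fun j => PTy.ofC ((specs.get i).2.2.get j).1) = minorTy (specs.get i) := by
    intro i
    exact congrArg parList (ofFn_comp_get (specs.get i).2.2 (fun p => PTy.ofC p.1))
  have hd := Deriv.appE specs.length hk (fun i => (specs.get i).2.2.length) hn
      (fun i j => ((specs.get i).2.2.get j).1) (fun i j => ((specs.get i).2.2.get j).2)
      Δ (fun i => (specs.get i).1) m0 (fun i => (specs.get i).2.1) M N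
      (by rw [emaj]; exact hM)
      (fun i => by rw [emin i]; exact hN _ (specs.get_mem _))
  have e1 : Ctx.tens Δ (tensCtxFin specs.length (fun i => (specs.get i).1))
      = Ctx.tens Δ (specsCtx specs) := by
    refine congrArg _ ?_
    funext x
    show tensList (List.ofFn fun i => (specs.get i).1 x)
      = tensList ((specs.map Prod.fst).map fun Γ => Γ x)
    rw [List.map_map]
    exact congrArg tensList (ofFn_comp_get specs (fun s => s.1 x))
  have e2 : parFin specs.length
      (fun i => parFin (specs.get i).2.2.length (fun j => ((specs.get i).2.2.get j).2))
      = outTy specs := by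
    refine congrArg parList ?_
    have : ∀ i : Fin specs.length, parFin (specs.get i).2.2.length
        (fun j => ((specs.get i).2.2.get j).2)
        = parList ((specs.get i).2.2.map Prod.snd) := by
      intro i
      exact congrArg parList (ofFn_comp_get (specs.get i).2.2 Prod.snd)
    rw [funext this]
    exact ofFn_comp_get specs (fun s => parList (s.2.2.map Prod.snd))
  have e3 : (∑ i, (specs.get i).2.1) = specsMsSum specs := by
    show _ = (specs.map fun s => s.2.1).sum
    rw [← ofFn_comp_get specs (fun s => s.2.1), List.sum_ofFn]
  have e4 : (∑ i : Fin specs.length, 2 * (specs.get i).2.2.length) = specsT specs := by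
    show _ = (specs.map fun s => 2 * s.2.2.length).sum
    rw [← ofFn_comp_get specs (fun s => 2 * s.2.2.length), List.sum_ofFn]
  rw [e1, e2, e3, e4] at hd
  exact hd

/-! Inversion lemmas -/

theorem deriv_var_inv' : ∀ {Γ P α m}, Deriv Γ P α m → ∀ {x}, P = .var x →
    m = 0 ∧ ∃ τ, PEq (.ofC τ) α ∧ CtxEq (Ctx.single x τ) Γ := by
  intro Γ P α m h
  induction h with
  | ax y τ =>
    intro x hP
    injection hP with e
    subst e
    exact ⟨rfl, τ, PEq.refl _, ctxEq_refl _⟩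
  | lamI => intro x hP; cases hP
  | appE => intro x hP; cases hP
  | plusL => intro x hP; cases hP
  | plusR => intro x hP; cases hP
  | parI => intro x hP; cases hP
  | eqv h hc hp ih =>
    intro x hP
    obtain ⟨hm, τ, hpe, hce⟩ := ih hP
    exact ⟨hm, τ, hpe.trans hp, ctxEq_trans hce hc⟩

theorem deriv_var_inv {Γ x α m} (h : Deriv Γ (.var x) α m) :
    m = 0 ∧ ∃ τ, PEq (.ofC τ) α ∧ CtxEq (Ctx.single x τ) Γ := deriv_var_inv' h rfl

theorem deriv_lam_inv' : ∀ {Γ P α m}, Deriv Γ P α m → ∀ {M}, P = .lam M →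
    ∃ L : List (Ctx × CTy × PTy × ℕ),
      (∀ p ∈ L, Deriv (Ctx.cons p.2.1 p.1) M p.2.2.1 p.2.2.2) ∧
      CtxEq (ctxTensList (L.map Prod.fst)) Γ ∧
      PEq (.ofC (tensList (L.map lamArr))) α ∧
      m = (L.map fun p => p.2.2.2).sum := by
  intro Γ P α m h
  induction h with
  | ax => intro M hP; cases hP
  | @lamI n Δ τ α' ms M0 hprem _ =>
    intro M hP
    injection hP with e
    subst e
    refine ⟨List.ofFn (fun i => (Δ i, τ i, α' i, ms i)), ?_, ?_, ?_, ?_⟩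
    · intro p hp
      rw [List.mem_ofFn] at hp
      obtain ⟨i, rfl⟩ := hp
      exact hprem i
    · apply ctxEq_of_eq
      intro x
      show tensList _ = tensList _
      rw [List.map_map, List.map_ofFn]
      rfl
    · have e : tensList ((List.ofFn fun i => ((Δ i, τ i, α' i, ms i) : Ctx × CTy × PTy × ℕ)).map lamArr)
          = tensFin n (fun i => CTy.arr (τ i) (α' i)) := by
        rw [List.map_ofFn]
        rfl
      rw [e]
      exact PEq.refl _
    · rw [List.map_ofFn, List.sum_ofFn]
      rfl
  | appE => intro M hP; cases hP
  | plusL => intro M hP; cases hP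
  | plusR => intro M hP; cases hP
  | parI => intro M hP; cases hP
  | eqv h hc hp ih =>
    intro M hP
    obtain ⟨L, h1, h2, h3, h4⟩ := ih hP
    exact ⟨L, h1, ctxEq_trans h2 hc, h3.trans hp, h4⟩

theorem deriv_lam_inv {Γ M α m} (h : Deriv Γ (.lam M) α m) :
    ∃ L : List (Ctx × CTy × PTy × ℕ),
      (∀ p ∈ L, Deriv (Ctx.cons p.2.1 p.1) M p.2.2.1 p.2.2.2) ∧
      CtxEq (ctxTensList (L.map Prod.fst)) Γ ∧
      PEq (.ofC (tensList (L.map lamArr))) α ∧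
      m = (L.map fun p => p.2.2.2).sum := deriv_lam_inv' h rfl

theorem deriv_plus_inv' : ∀ {Γ P α m}, Deriv Γ P α m → ∀ {M N}, P = .plus M N →
    ∃ m', m = m' + 1 ∧ (Deriv Γ M α m' ∨ Deriv Γ N α m') := by
  intro Γ P α m h
  induction h with
  | ax => intro M N hP; cases hP
  | lamI => intro M N hP; cases hP
  | appE => intro M N hP; cases hP
  | plusL N' h _ =>
    intro M N hP
    injection hP with e1 e2
    subst e1; subst e2
    exact ⟨_, rfl, .inl h⟩
  | plusR M' h _ =>
    intro M N hP
    injection hP with e1 e2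
    subst e1; subst e2
    exact ⟨_, rfl, .inr h⟩
  | parI => intro M N hP; cases hP
  | eqv h hc hp ih =>
    intro M N hP
    obtain ⟨m', rfl, hd⟩ := ih hP
    exact ⟨m', rfl, hd.imp (fun d => d.eqv hc hp) (fun d => d.eqv hc hp)⟩

theorem deriv_plus_inv {Γ M N α m} (h : Deriv Γ (.plus M N) α m) :
    ∃ m', m = m' + 1 ∧ (Deriv Γ M α m' ∨ Deriv Γ N α m') := deriv_plus_inv' h rfl

theorem deriv_par_inv' : ∀ {Γ P α m}, Deriv Γ P α m → ∀ {M N}, P = .par M N →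
    ∃ Δ₁ Δ₂ β₁ β₂ m₁ m₂, Deriv Δ₁ M β₁ m₁ ∧ Deriv Δ₂ N β₂ m₂ ∧
      CtxEq (Ctx.tens Δ₁ Δ₂) Γ ∧ PEq (.par β₁ β₂) α ∧ m = m₁ + m₂ := by
  intro Γ P α m h
  induction h with
  | ax => intro M N hP; cases hP
  | lamI => intro M N hP; cases hP
  | appE => intro M N hP; cases hP
  | plusL => intro M N hP; cases hP
  | plusR => intro M N hP; cases hP
  | @parI Δ Γ' M' N' α' β mm mm' h1 h2 _ _ =>
    intro M N hP
    injection hP with e1 e2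
    subst e1; subst e2
    exact ⟨Δ, Γ', α', β, mm, mm', h1, h2, ctxEq_refl _, PEq.refl _, rfl⟩
  | eqv h hc hp ih =>
    intro M N hP
    obtain ⟨Δ₁, Δ₂, β₁, β₂, m₁, m₂, h1, h2, h3, h4, h5⟩ := ih hP
    exact ⟨Δ₁, Δ₂, β₁, β₂, m₁, m₂, h1, h2, ctxEq_trans h3 hc, h4.trans hp, h5⟩

theorem deriv_par_inv {Γ M N α m} (h : Deriv Γ (.par M N) α m) :
    ∃ Δ₁ Δ₂ β₁ β₂ m₁ m₂, Deriv Δ₁ M β₁ m₁ ∧ Deriv Δ₂ N β₂ m₂ ∧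
      CtxEq (Ctx.tens Δ₁ Δ₂) Γ ∧ PEq (.par β₁ β₂) α ∧ m = m₁ + m₂ := deriv_par_inv' h rfl

theorem deriv_app_inv' : ∀ {Γ P α m}, Deriv Γ P α m → ∀ {M N}, P = .app M N →
    ∃ (Δ : Ctx) (specs : List AppSpec) (m0 : ℕ),
      specs ≠ [] ∧ (∀ s ∈ specs, s.2.2 ≠ []) ∧
      Deriv Δ M (majorTy specs) m0 ∧
      (∀ s ∈ specs, Deriv s.1 N (minorTy s) s.2.1) ∧
      CtxEq (Ctx.tens Δ (specsCtx specs)) Γ ∧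
      PEq (outTy specs) α ∧
      m = m0 + specsMsSum specs + specsT specs - 1 := by
  intro Γ P α m h
  induction h with
  | ax => intro M N hP; cases hP
  | lamI => intro M N hP; cases hP
  | @appE k hk nf hn τ α' Δ Γs m0 ms M0 N0 hM hN _ _ =>
    intro M N hP
    injection hP with e1 e2
    subst e1; subst e2
    refine ⟨Δ, List.ofFn (fun i => ((Γs i, ms i, List.ofFn (fun j => (τ i j, α' i j))) : AppSpec)),
      m0, ?_, ?_, ?_, ?_, ?_, ?_, ?_⟩
    · intro e
      have := congrArg List.length e
      simp only [List.length_ofFn, List.length_nil] at this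
      omega
    · intro s hs
      rw [List.mem_ofFn] at hs
      obtain ⟨i, rfl⟩ := hs
      intro e
      have := congrArg List.length e
      simp only [List.length_ofFn, List.length_nil] at this
      have := hn i
      omega
    · have e : majorTy (List.ofFn (fun i => ((Γs i, ms i, List.ofFn (fun j => (τ i j, α' i j))) : AppSpec)))
          = parFin k (fun i => .ofC (tensFin (nf i) (fun j => .arr (τ i j) (α' i j)))) := by
        refine congrArg parList ?_
        rw [List.map_ofFn]
        refine congrArg List.ofFn (funext fun i => ?_)
        show PTy.ofC (specTensor _) = _
        refine congrArg PTy.ofC ?_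
        show tensList ((List.ofFn (fun j => (τ i j, α' i j))).map _) = _
        rw [List.map_ofFn]
        rfl
      rw [e]
      exact hM
    · intro s hs
      rw [List.mem_ofFn] at hs
      obtain ⟨i, rfl⟩ := hs
      have e : minorTy ((Γs i, ms i, List.ofFn (fun j => (τ i j, α' i j))) : AppSpec)
          = parFin (nf i) (fun j => .ofC (τ i j)) := by
        refine congrArg parList ?_
        show (List.ofFn (fun j => (τ i j, α' i j))).map _ = _
        rw [List.map_ofFn]
        rfl
      rw [e]
      exact hN i
    · apply ctxEq_of_eq
      intro x
      refine congrArg (CTy.tens (Δ x)) ?_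
      show tensList _ = tensList _
      rw [List.map_map, List.map_ofFn]
      rfl
    · have e : outTy (List.ofFn (fun i => ((Γs i, ms i, List.ofFn (fun j => (τ i j, α' i j))) : AppSpec)))
          = parFin k (fun i => parFin (nf i) (α' i)) := by
        refine congrArg parList ?_
        rw [List.map_ofFn]
        refine congrArg List.ofFn (funext fun i => ?_)
        show parList ((List.ofFn (fun j => (τ i j, α' i j))).map Prod.snd) = _
        rw [List.map_ofFn]
        rfl
      rw [e]
      exact PEq.refl _
    · have e3 : specsMsSum (List.ofFn (fun i => ((Γs i, ms i, List.ofFn (fun j => (τ i j, α' i j))) : AppSpec)))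
          = ∑ i, ms i := by
        show (List.map _ _).sum = _
        rw [List.map_ofFn, List.sum_ofFn]
        rfl
      have e4 : specsT (List.ofFn (fun i => ((Γs i, ms i, List.ofFn (fun j => (τ i j, α' i j))) : AppSpec)))
          = ∑ i, 2 * nf i := by
        show (List.map _ _).sum = _
        rw [List.map_ofFn, List.sum_ofFn]
        refine Finset.sum_congr rfl (fun i _ => ?_)
        show 2 * (List.ofFn (fun j => (τ i j, α' i j))).length = 2 * nf i
        rw [List.length_ofFn]
      rw [e3, e4]
  | plusL => intro M N hP; cases hP
  | plusR => intro M N hP; cases hP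
  | parI => intro M N hP; cases hP
  | eqv h hc hp ih =>
    intro M N hP
    obtain ⟨Δ, specs, m0, h1, h2, h3, h4, h5, h6, h7⟩ := ih hP
    exact ⟨Δ, specs, m0, h1, h2, h3, h4, ctxEq_trans h5 hc, h6.trans hp, h7⟩

theorem deriv_app_inv {Γ M N α m} (h : Deriv Γ (.app M N) α m) :
    ∃ (Δ : Ctx) (specs : List AppSpec) (m0 : ℕ),
      specs ≠ [] ∧ (∀ s ∈ specs, s.2.2 ≠ []) ∧
      Deriv Δ M (majorTy specs) m0 ∧
      (∀ s ∈ specs, Deriv s.1 N (minorTy s) s.2.1) ∧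
      CtxEq (Ctx.tens Δ (specsCtx specs)) Γ ∧
      PEq (outTy specs) α ∧
      m = m0 + specsMsSum specs + specsT specs - 1 := deriv_app_inv' h rfl

end SRSpecs

section SRValues

theorem isValue_cases (V : Tm) (h : IsValue V) : (∃ x, V = .var x) ∨ (∃ M, V = .lam M) := by
  cases V with
  | var x => exact .inl ⟨x, rfl⟩
  | lam M => exact .inr ⟨M, rfl⟩
  | app => exact absurd h (by simp [IsValue])
  | plus => exact absurd h (by simp [IsValue])
  | par => exact absurd h (by simp [IsValue])

theorem value_ofC_shape {V Θ α m} (hV : IsValue V) (hd : Deriv Θ V α m) :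
    ∃ σ, PEq (.ofC σ) α := by
  rcases isValue_cases V hV with ⟨x, rfl⟩ | ⟨M, rfl⟩
  · obtain ⟨_, τ, hpe, _⟩ := deriv_var_inv hd
    exact ⟨τ, hpe⟩
  · obtain ⟨L, _, _, hty, _⟩ := deriv_lam_inv hd
    exact ⟨_, hty⟩

theorem value_pleaves_one {V Θ α m} (hV : IsValue V) (hd : Deriv Θ V α m) :
    (pleaves α).length = 1 := by
  obtain ⟨σ, hσ⟩ := value_ofC_shape hV hd
  have := (peq_pleaves_sound hσ).length_eq
  simpa [pleaves] using this.symm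

theorem pleaves_majorTy {specs : List AppSpec} (h : specs ≠ []) :
    pleaves (majorTy specs) = specs.map specTensor := by
  show pleaves (parList _) = _
  rw [show (specs.map fun s => PTy.ofC (specTensor s)) = (specs.map specTensor).map PTy.ofC by
    rw [List.map_map]; rfl]
  rw [pleaves_parList_ofC (by simp [h])]

theorem pleaves_minorTy {s : AppSpec} (h : s.2.2 ≠ []) :
    pleaves (minorTy s) = s.2.2.map Prod.fst := by
  show pleaves (parList _) = _
  rw [show (s.2.2.map fun p => PTy.ofC p.1) = (s.2.2.map Prod.fst).map PTy.ofC by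
    rw [List.map_map]; rfl]
  rw [pleaves_parList_ofC (by simp [h])]

theorem value_major_single {V Θ m} {specs : List AppSpec} (hV : IsValue V)
    (hd : Deriv Θ V (majorTy specs) m) (hne : specs ≠ []) : ∃ s, specs = [s] := by
  have h1 := value_pleaves_one hV hd
  rw [pleaves_majorTy hne, List.length_map] at h1
  exact List.length_eq_one_iff.mp h1

theorem value_minor_single {V Θ m} {s : AppSpec} (hV : IsValue V)
    (hd : Deriv Θ V (minorTy s) m) (hne : s.2.2 ≠ []) : ∃ p, s.2.2 = [p] := by
  have h1 := value_pleaves_one hV hd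
  rw [pleaves_minorTy hne, List.length_map] at h1
  exact List.length_eq_one_iff.mp h1

theorem mem_map_lamArr_arr {L : List (Ctx × CTy × PTy × ℕ)} :
    ∀ x ∈ L.map lamArr, ∃ a α, x = CTy.arr a α := by
  intro x hx
  obtain ⟨p, _, rfl⟩ := List.mem_map.mp hx
  exact ⟨_, _, rfl⟩

theorem value_at_one {V Θ σ m} (hV : IsValue V) (hd : Deriv Θ V (.ofC σ) m)
    (h1 : CEq σ .one) : m = 0 ∧ CtxEq Ctx.empty Θ := by
  rcases isValue_cases V hV with ⟨x, rfl⟩ | ⟨M, rfl⟩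
  · obtain ⟨rfl, τ, hpe, hce⟩ := deriv_var_inv hd
    have hcq : CEq τ .one := (ceq_of_peq_ofC hpe).trans h1
    refine ⟨rfl, ctxEq_trans ?_ hce⟩
    intro n
    show CEq CTy.one (Ctx.single x τ n)
    unfold Ctx.single
    split
    · exact hcq.symm
    · exact CEq.refl _
  · obtain ⟨L, hprem, hctx, hty, rfl⟩ := deriv_lam_inv hd
    have hcq : CEq (tensList (L.map lamArr)) .one := (ceq_of_peq_ofC hty).trans h1
    have hnil : L.map lamArr = [] := by
      rw [← tleaves_all_arr_eq (mem_map_lamArr_arr (L := L))]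
      exact tleaves_nil_of_ceq_one hcq
    have hL : L = [] := by
      cases L with
      | nil => rfl
      | cons a t => cases hnil
    subst hL
    exact ⟨rfl, ctxEq_trans (fun n => CEq.refl _) hctx⟩

theorem split_value {V Θ σ m} (hV : IsValue V) (hd : Deriv Θ V (.ofC σ) m) {σ₁ σ₂}
    (he : CEq σ (.tens σ₁ σ₂)) :
    ∃ Θ₁ Θ₂ m₁ m₂, Deriv Θ₁ V (.ofC σ₁) m₁ ∧ Deriv Θ₂ V (.ofC σ₂) m₂ ∧
      CtxEq (Ctx.tens Θ₁ Θ₂) Θ ∧ m = m₁ + m₂ := by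
  rcases isValue_cases V hV with ⟨x, rfl⟩ | ⟨M, rfl⟩
  · obtain ⟨rfl, τ, hpe, hce⟩ := deriv_var_inv hd
    have hcq : CEq τ (.tens σ₁ σ₂) := (ceq_of_peq_ofC hpe).trans he
    refine ⟨Ctx.single x σ₁, Ctx.single x σ₂, 0, 0, Deriv.ax x σ₁, Deriv.ax x σ₂,
      ctxEq_trans ?_ hce, rfl⟩
    intro n
    show CEq (CTy.tens (Ctx.single x σ₁ n) (Ctx.single x σ₂ n)) (Ctx.single x τ n)
    unfold Ctx.single
    by_cases hnx : n = x
    · simp only [hnx, if_pos rfl]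
      exact hcq.symm
    · simp only [if_neg hnx]
      exact CEq.unit _
  · obtain ⟨L, hprem, hctx, hty, rfl⟩ := deriv_lam_inv hd
    have hcq : CEq (tensList (L.map lamArr)) (.tens σ₁ σ₂) := (ceq_of_peq_ofC hty).trans he
    have hperm : PermRel ARel (L.map lamArr) (tleaves σ₁ ++ tleaves σ₂) := by
      have h' := ceq_tleaves_sound hcq
      rwa [tleaves_all_arr_eq (mem_map_lamArr_arr (L := L)),
        show tleaves (CTy.tens σ₁ σ₂) = tleaves σ₁ ++ tleaves σ₂ from rfl] at h'
    obtain ⟨L₁', L₂', hp, hf₁, hf₂⟩ := permRel_split (PermRel.symm' aRel_symm hperm)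
    obtain ⟨L', hpL, hmap⟩ := perm_map_extract lamArr hp rfl
    obtain ⟨LA, LB, rfl, hA, hB⟩ := map_eq_append_split hmap
    have dA := lamI_list LA M (fun p hp' => hprem p (hpL.mem_iff.mpr (List.mem_append_left _ hp')))
    have dB := lamI_list LB M (fun p hp' => hprem p (hpL.mem_iff.mpr (List.mem_append_right _ hp')))
    have eA : PEq (.ofC (tensList (LA.map lamArr))) (.ofC σ₁) := PEq.ofC (by
      rw [hA]
      exact (ceq_of_permrel_tleaves (PermRel.of_forall₂ (hf₁.imp fun _ _ h => aRel_to_ceq h))).symm)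
    have eB : PEq (.ofC (tensList (LB.map lamArr))) (.ofC σ₂) := PEq.ofC (by
      rw [hB]
      exact (ceq_of_permrel_tleaves (PermRel.of_forall₂ (hf₂.imp fun _ _ h => aRel_to_ceq h))).symm)
    refine ⟨ctxTensList (LA.map Prod.fst), ctxTensList (LB.map Prod.fst),
      (LA.map fun p => p.2.2.2).sum, (LB.map fun p => p.2.2.2).sum,
      dA.eqv (ctxEq_refl _) eA, dB.eqv (ctxEq_refl _) eB, ?_, ?_⟩
    · refine ctxEq_trans ?_ hctx
      intro y
      show CEq (CTy.tens (tensList _) (tensList _)) (tensList _)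
      refine CEq.trans (ceq_tensList_append _ _).symm ?_
      rw [← List.map_append, ← List.map_append]
      exact ceq_tensList_perm (((hpL.map Prod.fst).map (fun Γ => Γ y))).symm
    · have hs := (hpL.map (fun p => p.2.2.2)).sum_eq
      rw [List.map_append, List.sum_append] at hs
      exact hs

theorem tensFin_zero (f : Fin 0 → CTy) : tensFin 0 f = CTy.one := by
  show tensList (List.ofFn f) = CTy.one
  rw [List.ofFn_zero]
  rfl

theorem tensFin_succ {n : ℕ} (f : Fin (n + 1) → CTy) :
    tensFin (n + 1) f = CTy.tens (f 0) (tensFin n (fun i => f i.succ)) := by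
  show tensList (List.ofFn f) = _
  rw [List.ofFn_succ]
  rfl

theorem parFin_succ {n : ℕ} (f : Fin (n + 1) → PTy) (h : 0 < n) :
    parFin (n + 1) f = PTy.par (f 0) (parFin n (fun i => f i.succ)) := by
  show parList (List.ofFn f) = _
  rw [List.ofFn_succ, parList_cons]
  · rfl
  · intro e
    have := congrArg List.length e
    simp only [List.length_ofFn, List.length_nil] at this
    omega

theorem ceq_tensFin_congr {n} {f g : Fin n → CTy} (h : ∀ i, CEq (f i) (g i)) :
    CEq (tensFin n f) (tensFin n g) := by
  induction n with
  | zero => rw [tensFin_zero, tensFin_zero]; exact CEq.refl _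
  | succ n ih =>
    rw [tensFin_succ, tensFin_succ]
    exact CEq.tensCongr (h 0) (ih (fun i => h i.succ))

theorem ceq_tensFin_tens {n} (f g : Fin n → CTy) :
    CEq (tensFin n (fun i => .tens (f i) (g i))) (.tens (tensFin n f) (tensFin n g)) := by
  induction n with
  | zero =>
    rw [tensFin_zero, tensFin_zero, tensFin_zero]
    exact (CEq.unit _).symm
  | succ n ih =>
    rw [tensFin_succ, tensFin_succ, tensFin_succ]
    exact (CEq.tensCongr (CEq.refl _) (ih _ _)).trans (cEq_interchange _ _ _ _)

theorem ctxEq_tensCtxFin_congr {n} {A B : Fin n → Ctx} (h : ∀ i, CtxEq (A i) (B i)) :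
    CtxEq (tensCtxFin n A) (tensCtxFin n B) := fun x => ceq_tensFin_congr (fun i => h i x)

theorem ctxEq_tensCtxFin_tens {n} (A B : Fin n → Ctx) :
    CtxEq (tensCtxFin n (fun i => Ctx.tens (A i) (B i)))
      (Ctx.tens (tensCtxFin n A) (tensCtxFin n B)) := fun x => ceq_tensFin_tens _ _

theorem split_value_fin {V : Tm} (hV : IsValue V) : ∀ {n : ℕ} {σ : Fin n → CTy} {Θ : Ctx} {m : ℕ},
    Deriv Θ V (.ofC (tensFin n σ)) m →
    ∃ (Θs : Fin n → Ctx) (ms : Fin n → ℕ), (∀ i, Deriv (Θs i) V (.ofC (σ i)) (ms i)) ∧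
      CtxEq (tensCtxFin n Θs) Θ ∧ (∑ i, ms i) = m := by
  intro n
  induction n with
  | zero =>
    intro σ Θ m hd
    rw [tensFin_zero] at hd
    obtain ⟨rfl, hce⟩ := value_at_one hV hd (CEq.refl _)
    refine ⟨fun i => i.elim0, fun i => i.elim0, fun i => i.elim0, ?_, by simp⟩
    refine ctxEq_trans ?_ hce
    intro x
    rw [show tensCtxFin 0 (fun i : Fin 0 => i.elim0) x = tensFin 0 (fun i => i.elim0) from rfl,
      tensFin_zero]
    exact CEq.refl _
  | succ n ih =>
    intro σ Θ m hd
    rw [show PTy.ofC (tensFin (n+1) σ)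
        = PTy.ofC (CTy.tens (σ 0) (tensFin n (fun i => σ i.succ)))
      from congrArg _ (tensFin_succ σ)] at hd
    obtain ⟨Θ₁, Θ₂, m₁, m₂, d₁, d₂, hce, rfl⟩ := split_value hV hd (CEq.refl _)
    obtain ⟨Θs', ms', hds', hce', hsum⟩ := ih d₂
    refine ⟨(Fin.cons Θ₁ Θs' : Fin (n+1) → Ctx), (Fin.cons m₁ ms' : Fin (n+1) → ℕ), ?_, ?_, ?_⟩
    · intro i
      refine Fin.cases ?_ ?_ i
      · simpa using d₁
      · intro j
        simpa using hds' j
    · refine ctxEq_trans ?_ hce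
      intro x
      rw [show tensCtxFin (n+1) (Fin.cons Θ₁ Θs' : Fin (n+1) → Ctx) x = tensFin (n+1) (fun i => (Fin.cons Θ₁ Θs' : Fin (n+1) → Ctx) i x)
        from rfl, tensFin_succ]
      refine CEq.tensCongr ?_ ?_
      · simp only [Fin.cons_zero]
        exact CEq.refl _
      · refine CEq.trans (ceq_tensFin_congr (fun i => ?_)) (hce' x)
        simp only [Fin.cons_succ]
        exact CEq.refl _
    · rw [Fin.sum_univ_succ]
      simp only [Fin.cons_zero, Fin.cons_succ]
      rw [hsum]

end SRValues

section SRSubst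

def insertCtx (c : ℕ) (Γ : Ctx) : Ctx := fun n =>
  if n < c then Γ n else if n = c then .one else Γ (n - 1)

def removeCtx (k : ℕ) (Γ : Ctx) : Ctx := fun n => if n < k then Γ n else Γ (n + 1)

theorem ceq_tensFin_one {n} : CEq (tensFin n (fun _ => CTy.one)) CTy.one := by
  induction n with
  | zero => rw [tensFin_zero]; exact CEq.refl _
  | succ n ih => rw [tensFin_succ]; exact (CEq.tensCongr (CEq.refl _) ih).trans (CEq.unit _)

theorem ctxEq_cons {a b : CTy} {A B : Ctx} (h : CEq a b) (h' : CtxEq A B) :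
    CtxEq (Ctx.cons a A) (Ctx.cons b B) := by
  intro n
  cases n with
  | zero => exact h
  | succ n => exact h' n

theorem insertCtx_cons (c : ℕ) (τ : CTy) (Δ : Ctx) :
    insertCtx (c + 1) (Ctx.cons τ Δ) = Ctx.cons τ (insertCtx c Δ) := by
  funext n
  cases n with
  | zero => simp [insertCtx, Ctx.cons]
  | succ n =>
    show (if n + 1 < c + 1 then Ctx.cons τ Δ (n+1) else if n + 1 = c + 1 then CTy.one
      else Ctx.cons τ Δ (n + 1 - 1)) = (if n < c then Δ n else if n = c then CTy.one else Δ (n-1))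
    by_cases h1 : n < c
    · rw [if_pos (by omega), if_pos h1]; rfl
    · by_cases h2 : n = c
      · rw [if_neg (by omega), if_pos (by omega), if_neg h1, if_pos h2]
      · rw [if_neg (by omega), if_neg (by omega), if_neg h1, if_neg h2]
        cases n with
        | zero => omega
        | succ n => rfl

theorem insertCtx_zero (Θ : Ctx) : insertCtx 0 Θ = Ctx.cons CTy.one Θ := by
  funext n
  cases n with
  | zero => rfl
  | succ n => rfl

theorem removeCtx_cons (k : ℕ) (τ : CTy) (Δ : Ctx) :
    removeCtx (k + 1) (Ctx.cons τ Δ) = Ctx.cons τ (removeCtx k Δ) := by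
  funext n
  cases n with
  | zero => simp [removeCtx, Ctx.cons]
  | succ n =>
    show (if n + 1 < k + 1 then Δ n else Δ (n + 1)) = (if n < k then Δ n else Δ (n+1))
    by_cases h1 : n < k
    · rw [if_pos (by omega), if_pos h1]
    · rw [if_neg (by omega), if_neg h1]

theorem removeCtx_zero_cons (τ : CTy) (Δ : Ctx) : removeCtx 0 (Ctx.cons τ Δ) = Δ := by
  funext n
  cases n with
  | zero => rfl
  | succ n => rfl

theorem tens_cons (a b : CTy) (A B : Ctx) :
    Ctx.tens (Ctx.cons a A) (Ctx.cons b B) = Ctx.cons (CTy.tens a b) (Ctx.tens A B) := by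
  funext n
  cases n with
  | zero => rfl
  | succ n => rfl

theorem ctxEq_insert_tensCtxFin {n} (c : ℕ) (Δ : Fin n → Ctx) :
    CtxEq (tensCtxFin n (fun i => insertCtx c (Δ i))) (insertCtx c (tensCtxFin n Δ)) := by
  intro x
  show CEq (tensFin n fun i => insertCtx c (Δ i) x) (insertCtx c (tensCtxFin n Δ) x)
  by_cases h1 : x < c
  · simp only [insertCtx, if_pos h1]
    exact CEq.refl _
  · by_cases h2 : x = c
    · simp only [insertCtx, if_neg h1, if_pos h2]
      exact ceq_tensFin_one
    · simp only [insertCtx, if_neg h1, if_neg h2]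
      exact CEq.refl _

theorem ctxEq_insert_tens (c : ℕ) (A B : Ctx) :
    CtxEq (Ctx.tens (insertCtx c A) (insertCtx c B)) (insertCtx c (Ctx.tens A B)) := by
  intro x
  show CEq (CTy.tens (insertCtx c A x) (insertCtx c B x)) (insertCtx c (Ctx.tens A B) x)
  by_cases h1 : x < c
  · simp only [insertCtx, if_pos h1]
    exact CEq.refl _
  · by_cases h2 : x = c
    · simp only [insertCtx, if_neg h1, if_pos h2]
      exact CEq.unit _
    · simp only [insertCtx, if_neg h1, if_neg h2]
      exact CEq.refl _

theorem ctxEq_insert_congr (c : ℕ) {A B : Ctx} (h : CtxEq A B) :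
    CtxEq (insertCtx c A) (insertCtx c B) := by
  intro x
  unfold insertCtx
  split_ifs with h1 h2
  · exact h x
  · exact CEq.refl _
  · exact h _

theorem isValue_shift {V : Tm} (c : ℕ) (h : IsValue V) : IsValue (shiftTm c V) := by
  rcases isValue_cases V h with ⟨x, rfl⟩ | ⟨M, rfl⟩
  · show IsValue (if x < c then Tm.var x else Tm.var (x + 1))
    split <;> trivial
  · trivial

theorem shift_deriv : ∀ {Γ M α m}, Deriv Γ M α m → ∀ (c : ℕ),
    Deriv (insertCtx c Γ) (shiftTm c M) α m := by
  intro Γ M α m h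
  induction h with
  | ax x τ =>
    intro c
    by_cases hx : x < c
    · rw [show shiftTm c (.var x) = .var x by simp [shiftTm, hx]]
      refine (Deriv.ax x τ).eqv ?_ (PEq.refl _)
      intro n
      show CEq (Ctx.single x τ n) (insertCtx c (Ctx.single x τ) n)
      unfold insertCtx Ctx.single
      split_ifs <;> first | exact CEq.refl _ | omega
    · rw [show shiftTm c (.var x) = .var (x + 1) by simp [shiftTm, hx]]
      refine (Deriv.ax (x + 1) τ).eqv ?_ (PEq.refl _)
      intro n
      show CEq (Ctx.single (x + 1) τ n) (insertCtx c (Ctx.single x τ) n)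
      unfold insertCtx Ctx.single
      split_ifs <;> first | exact CEq.refl _ | omega
  | lamI n Δ τ' α' ms M0 hprem ih =>
    intro c
    have hd2 := Deriv.lamI n (fun i => insertCtx c (Δ i)) τ' α' ms (shiftTm (c + 1) M0)
      (fun i => by
        have h0 := ih i (c + 1)
        rwa [insertCtx_cons] at h0)
    exact hd2.eqv (ctxEq_insert_tensCtxFin c Δ) (PEq.refl _)
  | appE k' hk nf hn τ' α' Δ Γs m0 ms M0 N0 hM hN ihM ihN =>
    intro c
    have hd2 := Deriv.appE k' hk nf hn τ' α' (insertCtx c Δ) (fun i => insertCtx c (Γs i))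
      m0 ms (shiftTm c M0) (shiftTm c N0) (ihM c) (fun i => ihN i c)
    refine hd2.eqv ?_ (PEq.refl _)
    refine ctxEq_trans (ctxEq_tens (ctxEq_refl _) (ctxEq_insert_tensCtxFin c Γs)) ?_
    exact ctxEq_insert_tens c _ _
  | plusL N' h ih =>
    intro c
    exact Deriv.plusL _ (ih c)
  | plusR M' h ih =>
    intro c
    exact Deriv.plusR _ (ih c)
  | parI h1 h2 ih1 ih2 =>
    intro c
    exact (Deriv.parI (ih1 c) (ih2 c)).eqv (ctxEq_insert_tens c _ _) (PEq.refl _)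
  | eqv h hc hp ih =>
    intro c
    exact (ih c).eqv (ctxEq_insert_congr c hc) hp

theorem subst_deriv : ∀ {Γ M α m}, Deriv Γ M α m → ∀ (k : ℕ) {V Θ mv}, IsValue V →
    Deriv Θ V (.ofC (Γ k)) mv →
    Deriv (Ctx.tens (removeCtx k Γ) Θ) (substTm M k V) α (m + mv) := by
  intro Γ M α m h
  induction h with
  | ax x τ =>
    intro k V Θ mv hV hdV
    by_cases hxk : x = k
    · subst hxk
      rw [show Ctx.single x τ x = τ by simp [Ctx.single]] at hdV
      rw [show substTm (.var x) x V = V by simp [substTm]]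
      rw [Nat.zero_add]
      refine hdV.eqv ?_ (PEq.refl _)
      intro n
      show CEq (Θ n) (CTy.tens (removeCtx x (Ctx.single x τ) n) (Θ n))
      have e : removeCtx x (Ctx.single x τ) n = CTy.one := by
        unfold removeCtx Ctx.single
        split_ifs <;> first | rfl | omega
      rw [e]
      exact (cEq_unitL _).symm
    · rw [show Ctx.single x τ k = CTy.one by simp [Ctx.single, Ne.symm hxk]] at hdV
      obtain ⟨rfl, hΘ⟩ := value_at_one hV hdV (CEq.refl _)
      by_cases hkx : k < x
      · rw [show substTm (.var x) k V = .var (x - 1) by simp [substTm, hxk, hkx]]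
        refine (Deriv.ax (x - 1) τ).eqv ?_ (PEq.refl _)
        intro n
        show CEq (Ctx.single (x - 1) τ n) (CTy.tens (removeCtx k (Ctx.single x τ) n) (Θ n))
        have e : removeCtx k (Ctx.single x τ) n = Ctx.single (x - 1) τ n := by
          unfold removeCtx Ctx.single
          split_ifs <;> first | rfl | omega
        rw [e]
        exact ((CEq.tensCongr (CEq.refl _) (hΘ n).symm).trans (CEq.unit _)).symm
      · rw [show substTm (.var x) k V = .var x by simp [substTm, hxk, hkx]]
        refine (Deriv.ax x τ).eqv ?_ (PEq.refl _)
        intro n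
        show CEq (Ctx.single x τ n) (CTy.tens (removeCtx k (Ctx.single x τ) n) (Θ n))
        have e : removeCtx k (Ctx.single x τ) n = Ctx.single x τ n := by
          unfold removeCtx Ctx.single
          split_ifs <;> first | rfl | omega
        rw [e]
        exact ((CEq.tensCongr (CEq.refl _) (hΘ n).symm).trans (CEq.unit _)).symm
  | lamI n Δ τ' α' ms M0 hprem ih =>
    intro k V Θ mv hV hdV
    obtain ⟨Θs, mvs, hds, hctx, hsum⟩ := split_value_fin hV
      (hdV : Deriv Θ V (.ofC (tensFin n (fun i => Δ i k))) mv)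
    have ihs : ∀ i, Deriv (Ctx.cons (τ' i) (Ctx.tens (removeCtx k (Δ i)) (Θs i)))
        (substTm M0 (k + 1) (shiftTm 0 V)) (α' i) (ms i + mvs i) := by
      intro i
      have hvs := shift_deriv (hds i) 0
      have h0 := ih i (k + 1) (isValue_shift 0 hV)
        (hvs : Deriv (insertCtx 0 (Θs i)) (shiftTm 0 V)
          (.ofC (Ctx.cons (τ' i) (Δ i) (k + 1))) (mvs i))
      rw [removeCtx_cons, insertCtx_zero, tens_cons] at h0
      exact h0.eqv (ctxEq_cons (CEq.unit _) (ctxEq_refl _)) (PEq.refl _)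
    have hd2 := Deriv.lamI n (fun i => Ctx.tens (removeCtx k (Δ i)) (Θs i)) τ' α'
      (fun i => ms i + mvs i) _ ihs
    rw [show (∑ i, (ms i + mvs i)) = (∑ i, ms i) + mv by
      rw [Finset.sum_add_distrib, hsum]] at hd2
    refine hd2.eqv ?_ (PEq.refl _)
    refine ctxEq_trans (ctxEq_tensCtxFin_tens _ _) (ctxEq_tens ?_ hctx)
    intro x
    show CEq (tensFin n fun i => removeCtx k (Δ i) x) (removeCtx k (tensCtxFin n Δ) x)
    by_cases hx : x < k
    · simp only [removeCtx, if_pos hx]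
      exact CEq.refl _
    · simp only [removeCtx, if_neg hx]
      exact CEq.refl _
  | appE k' hk nf hn τ' α' Δ Γs m0 ms M0 N0 hM hN ihM ihN =>
    intro k V Θ mv hV hdV
    obtain ⟨Θ₀, Θ₁, mv₀, mv₁, d₀, d₁, hce, rfl⟩ := split_value hV hdV (CEq.refl _)
    obtain ⟨Θs, mvs, hds, hctx1, hsum⟩ := split_value_fin hV
      (d₁ : Deriv Θ₁ V (.ofC (tensFin k' (fun i => Γs i k))) mv₁)
    have hM' := ihM k hV d₀
    have hN' := fun i => ihN i k hV (hds i)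
    have hd2 := Deriv.appE k' hk nf hn τ' α' (Ctx.tens (removeCtx k Δ) Θ₀)
      (fun i => Ctx.tens (removeCtx k (Γs i)) (Θs i)) (m0 + mv₀) (fun i => ms i + mvs i)
      _ _ hM' hN'
    have h2T : 2 ≤ ∑ i, 2 * nf i := by
      calc 2 ≤ 2 * nf ⟨0, hk⟩ := by have := hn ⟨0, hk⟩; omega
      _ ≤ ∑ i, 2 * nf i := Finset.single_le_sum (f := fun i => 2 * nf i)
        (fun i _ => Nat.zero_le _) (Finset.mem_univ (⟨0, hk⟩ : Fin k'))
    rw [show (m0 + mv₀ + (∑ i, (ms i + mvs i)) + (∑ i, 2 * nf i)) - 1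
        = ((m0 + (∑ i, ms i) + (∑ i, 2 * nf i)) - 1) + (mv₀ + mv₁) by
      rw [Finset.sum_add_distrib, hsum]
      omega] at hd2
    refine hd2.eqv ?_ (PEq.refl _)
    refine ctxEq_trans (ctxEq_tens (ctxEq_refl _) (ctxEq_tensCtxFin_tens _ _)) ?_
    refine ctxEq_trans (ctxEq_interchange _ _ _ _) ?_
    refine ctxEq_tens ?_ (ctxEq_trans (ctxEq_tens (ctxEq_refl _) hctx1) hce)
    intro x
    show CEq (CTy.tens (removeCtx k Δ x) (tensFin k' fun i => removeCtx k (Γs i) x))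
      (removeCtx k (Ctx.tens Δ (tensCtxFin k' Γs)) x)
    by_cases hx : x < k
    · simp only [removeCtx, if_pos hx]
      exact CEq.refl _
    · simp only [removeCtx, if_neg hx]
      exact CEq.refl _
  | @plusL Δ' M' α'' m' N' h ih =>
    intro k V Θ mv hV hdV
    have h2 := Deriv.plusL (substTm N' k V) (ih k hV hdV)
    rwa [show m' + mv + 1 = m' + 1 + mv from by omega] at h2
  | @plusR Δ' N'' α'' m' M' h ih =>
    intro k V Θ mv hV hdV
    have h2 := Deriv.plusR (substTm M' k V) (ih k hV hdV)
    rwa [show m' + mv + 1 = m' + 1 + mv from by omega] at h2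
  | @parI Δ' Γ' M' N' α'' β'' mm mm' h1 h2 ih1 ih2 =>
    intro k V Θ mv hV hdV
    obtain ⟨Θ₀, Θ₁, mv₀, mv₁, d₀, d₁, hce, rfl⟩ := split_value hV hdV (CEq.refl _)
    have hd2 := Deriv.parI (ih1 k hV d₀) (ih2 k hV d₁)
    rw [show (mm + mv₀) + (mm' + mv₁) = (mm + mm') + (mv₀ + mv₁) from by omega] at hd2
    refine hd2.eqv ?_ (PEq.refl _)
    refine ctxEq_trans (ctxEq_interchange _ _ _ _) ?_
    refine ctxEq_tens ?_ hce
    intro x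
    show CEq (CTy.tens (removeCtx k _ x) (removeCtx k _ x)) (removeCtx k (Ctx.tens _ _) x)
    by_cases hx : x < k
    · simp only [removeCtx, if_pos hx]
      exact CEq.refl _
    · simp only [removeCtx, if_neg hx]
      exact CEq.refl _
  | eqv h hc hp ih =>
    intro k V Θ mv hV hdV
    have hdV' := hdV.eqv (ctxEq_refl _) (PEq.ofC (hc k).symm)
    refine (ih k hV hdV').eqv (ctxEq_tens ?_ (ctxEq_refl _)) hp
    intro x
    unfold removeCtx
    split_ifs
    · exact hc x
    · exact hc _

end SRSubst

section SRMain

theorem specsT_pos {specs : List AppSpec} (h : specs ≠ []) (h2 : ∀ s ∈ specs, s.2.2 ≠ []) :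
    2 ≤ specsT specs := by
  cases specs with
  | nil => exact absurd rfl h
  | cons s t =>
    have h3 : 0 < s.2.2.length := List.length_pos_iff.mpr (h2 s (by simp))
    show 2 ≤ (List.map _ (s :: t)).sum
    rw [List.map_cons, List.sum_cons]
    omega

theorem specsMsSum_append (a b : List AppSpec) :
    specsMsSum (a ++ b) = specsMsSum a + specsMsSum b := by
  show (List.map _ (a ++ b)).sum = _
  rw [List.map_append, List.sum_append]
  rfl

theorem specsT_append (a b : List AppSpec) :
    specsT (a ++ b) = specsT a + specsT b := by
  show (List.map _ (a ++ b)).sum = _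
  rw [List.map_append, List.sum_append]
  rfl

theorem specsMsSum_perm {a b : List AppSpec} (h : a.Perm b) : specsMsSum a = specsMsSum b :=
  (h.map _).sum_eq

theorem specsT_perm {a b : List AppSpec} (h : a.Perm b) : specsT a = specsT b :=
  (h.map _).sum_eq

theorem peq_par_outTy {specs sA sB : List AppSpec} (hps : specs.Perm (sA ++ sB))
    (hA : sA ≠ []) (hB : sB ≠ []) : PEq (.par (outTy sA) (outTy sB)) (outTy specs) := by
  show PEq (.par (parList _) (parList _)) (parList _)
  refine PEq.trans (peq_parList_append (by simp [hA]) (by simp [hB])).symm ?_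
  rw [← List.map_append]
  exact peq_parList_perm (hps.map _).symm

theorem ctxEq_specsCtx_split {specs sA sB : List AppSpec} (hps : specs.Perm (sA ++ sB)) :
    CtxEq (Ctx.tens (specsCtx sA) (specsCtx sB)) (specsCtx specs) := by
  intro x
  show CEq (CTy.tens (tensList _) (tensList _)) (tensList _)
  refine (ceq_tensList_append _ _).symm.trans ?_
  rw [← List.map_append, ← List.map_append]
  exact ceq_tensList_perm (((hps.map Prod.fst).map (fun Γ => Γ x)).symm)

theorem step_sr : ∀ {b M N}, Step b M N → b = false → ∀ {Γ α m}, Deriv Γ M α m →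
    ∃ m', Deriv Γ N α m' ∧ m = m' + 1 := by
  intro b M N hstep
  induction hstep with
  | @beta M0 V hV =>
    intro _ Γ α m hd
    obtain ⟨Δ, specs, m0, hne, harr, hM, hN, hctx, hout, hm⟩ := deriv_app_inv hd
    obtain ⟨s, rfl⟩ := value_major_single (by trivial) hM hne
    obtain ⟨p, hs22⟩ := value_minor_single hV (hN s (by simp)) (harr s (by simp))
    obtain ⟨L, hprem, hLctx, hLty, hm0⟩ := deriv_lam_inv hM
    have hceq : CEq (tensList (L.map lamArr)) (specTensor s) := ceq_of_peq_ofC hLty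
    have hst : specTensor s = CTy.tens (CTy.arr p.1 p.2) CTy.one := by
      show tensList _ = _
      rw [hs22]
      rfl
    have htl : PermRel ARel (L.map lamArr) [CTy.arr p.1 p.2] := by
      have h' := ceq_tleaves_sound hceq
      rwa [tleaves_all_arr_eq (mem_map_lamArr_arr (L := L)),
        show tleaves (specTensor s) = [CTy.arr p.1 p.2] from by rw [hst]; rfl] at h'
    obtain ⟨q, rfl⟩ := List.length_eq_one_iff.mp (by simpa using htl.length_eq)
    have har : ARel (lamArr q) (.arr p.1 p.2) := arel_of_singletons htl
    have hq := hprem q (by simp)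
    have hVd : Deriv s.1 V (.ofC q.2.1) s.2.1 := by
      have h0 := hN s (by simp)
      rw [show minorTy s = .ofC p.1 from by show parList _ = _; rw [hs22]; rfl] at h0
      exact h0.eqv (ctxEq_refl _) (PEq.ofC har.1.symm)
    have hsub := subst_deriv hq 0 hV
      (hVd : Deriv s.1 V (.ofC (Ctx.cons q.2.1 q.1 0)) s.2.1)
    rw [removeCtx_zero_cons] at hsub
    refine ⟨q.2.2.2 + s.2.1, hsub.eqv ?_ ?_, ?_⟩
    · refine ctxEq_trans (ctxEq_tens ?_ ?_) hctx
      · exact ctxEq_trans (fun x => (CEq.unit (q.1 x)).symm) hLctx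
      · exact fun x => (CEq.unit (s.1 x)).symm
    · refine har.2.trans (PEq.trans ?_ hout)
      rw [show outTy [s] = parList (s.2.2.map Prod.snd) from rfl, hs22]
      exact PEq.refl _
    · have e1 : specsMsSum [s] = s.2.1 := by simp [specsMsSum]
      have e2 : specsT [s] = 2 := by simp [specsT, hs22]
      have e3 : m0 = q.2.2.2 := by simpa using hm0
      omega
  | parAppL M1 N1 P =>
    intro _ Γ α m hd
    obtain ⟨Δ, specs, m0, hne, harr, hM, hN, hctx, hout, hm⟩ := deriv_app_inv hd
    obtain ⟨Δ₁, Δ₂, β₁, β₂, m₁, m₂, dM, dN, hcpar, hppar, hm0⟩ := deriv_par_inv hM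
    have hpr : PermRel CEq (pleaves β₁ ++ pleaves β₂) (specs.map specTensor) := by
      have h' := peq_pleaves_sound hppar
      rwa [show pleaves (.par β₁ β₂) = pleaves β₁ ++ pleaves β₂ from rfl,
        pleaves_majorTy hne] at h'
    obtain ⟨L₁, L₂, hp, hf₁, hf₂⟩ := permRel_split hpr
    obtain ⟨specs', hps, hmap⟩ := perm_map_extract specTensor hp rfl
    obtain ⟨sA, sB, rfl, hA, hB⟩ := map_eq_append_split hmap
    have hAne : sA ≠ [] := by
      intro e
      rw [e] at hA
      have hl := hf₁.length_eq
      rw [← hA] at hl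
      simp only [List.map_nil, List.length_nil] at hl
      exact pleaves_ne_nil β₁ (List.length_eq_zero_iff.mp hl)
    have hBne : sB ≠ [] := by
      intro e
      rw [e] at hB
      have hl := hf₂.length_eq
      rw [← hB] at hl
      simp only [List.map_nil, List.length_nil] at hl
      exact pleaves_ne_nil β₂ (List.length_eq_zero_iff.mp hl)
    have hmemA : ∀ s ∈ sA, s ∈ specs := fun s hs => hps.mem_iff.mpr (List.mem_append_left _ hs)
    have hmemB : ∀ s ∈ sB, s ∈ specs := fun s hs => hps.mem_iff.mpr (List.mem_append_right _ hs)
    have eA : PEq β₁ (majorTy sA) := by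
      have h' := peq_of_permrel_pleaves (PermRel.of_forall₂ hf₁)
      rw [← hA, show ((sA.map specTensor).map PTy.ofC) = sA.map (fun s => PTy.ofC (specTensor s))
        from by rw [List.map_map]; rfl] at h'
      exact h'
    have eB : PEq β₂ (majorTy sB) := by
      have h' := peq_of_permrel_pleaves (PermRel.of_forall₂ hf₂)
      rw [← hB, show ((sB.map specTensor).map PTy.ofC) = sB.map (fun s => PTy.ofC (specTensor s))
        from by rw [List.map_map]; rfl] at h'
      exact h'
    have dA := appE_list sA hAne (fun s hs => harr s (hmemA s hs)) Δ₁ m₁ M1 P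
      (dM.eqv (ctxEq_refl _) eA) (fun s hs => hN s (hmemA s hs))
    have dB := appE_list sB hBne (fun s hs => harr s (hmemB s hs)) Δ₂ m₂ N1 P
      (dN.eqv (ctxEq_refl _) eB) (fun s hs => hN s (hmemB s hs))
    refine ⟨_, (Deriv.parI dA dB).eqv ?_ ?_, ?_⟩
    · refine ctxEq_trans (ctxEq_interchange _ _ _ _) ?_
      exact ctxEq_trans (ctxEq_tens hcpar (ctxEq_specsCtx_split hps)) hctx
    · exact (peq_par_outTy hps hAne hBne).trans hout
    · have e1 : specsMsSum specs = specsMsSum sA + specsMsSum sB := by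
        rw [specsMsSum_perm hps, specsMsSum_append]
      have e2 : specsT specs = specsT sA + specsT sB := by
        rw [specsT_perm hps, specsT_append]
      have e3 := specsT_pos hAne (fun s hs => harr s (hmemA s hs))
      have e4 := specsT_pos hBne (fun s hs => harr s (hmemB s hs))
      omega
  | @parAppR V M1 N1 hV =>
    intro _ Γ α m hd
    obtain ⟨Δ, specs, m0, hne, harr, hM, hN, hctx, hout, hm⟩ := deriv_app_inv hd
    obtain ⟨s, rfl⟩ := value_major_single hV hM hne
    obtain ⟨Δ₁, Δ₂, β₁, β₂, m₁, m₂, dM, dN, hcpar, hppar, hm1⟩ := deriv_par_inv (hN s (by simp))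
    have hpr : PermRel CEq (pleaves β₁ ++ pleaves β₂) (s.2.2.map Prod.fst) := by
      have h' := peq_pleaves_sound hppar
      rwa [show pleaves (.par β₁ β₂) = pleaves β₁ ++ pleaves β₂ from rfl,
        pleaves_minorTy (harr s (by simp))] at h'
    obtain ⟨L₁, L₂, hp, hf₁, hf₂⟩ := permRel_split hpr
    obtain ⟨pairs', hq, hmap⟩ := perm_map_extract Prod.fst hp rfl
    obtain ⟨pA, pB, rfl, hA, hB⟩ := map_eq_append_split hmap
    have hAne : pA ≠ [] := by
      intro e
      rw [e] at hA
      have hl := hf₁.length_eq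
      rw [← hA] at hl
      simp only [List.map_nil, List.length_nil] at hl
      exact pleaves_ne_nil β₁ (List.length_eq_zero_iff.mp hl)
    have hBne : pB ≠ [] := by
      intro e
      rw [e] at hB
      have hl := hf₂.length_eq
      rw [← hB] at hl
      simp only [List.map_nil, List.length_nil] at hl
      exact pleaves_ne_nil β₂ (List.length_eq_zero_iff.mp hl)
    have eA : PEq β₁ (minorTy ((Δ₁, m₁, pA) : AppSpec)) := by
      have h' := peq_of_permrel_pleaves (PermRel.of_forall₂ hf₁)
      rw [← hA, show ((pA.map Prod.fst).map PTy.ofC) = pA.map (fun p => PTy.ofC p.1)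
        from by rw [List.map_map]; rfl] at h'
      exact h'
    have eB : PEq β₂ (minorTy ((Δ₂, m₂, pB) : AppSpec)) := by
      have h' := peq_of_permrel_pleaves (PermRel.of_forall₂ hf₂)
      rw [← hB, show ((pB.map Prod.fst).map PTy.ofC) = pB.map (fun p => PTy.ofC p.1)
        from by rw [List.map_map]; rfl] at h'
      exact h'
    have hsp : CEq (specTensor s)
        (.tens (specTensor ((Δ₁, m₁, pA) : AppSpec)) (specTensor ((Δ₂, m₂, pB) : AppSpec))) := by
      show CEq (tensList _) _
      refine (ceq_tensList_perm (hq.map (fun p => CTy.arr p.1 p.2))).trans ?_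
      rw [List.map_append]
      exact ceq_tensList_append _ _
    obtain ⟨Θa, Θb, m0a, m0b, d0a, d0b, hceΘ, hm0⟩ := split_value hV hM hsp
    have dA := appE_list [((Δ₁, m₁, pA) : AppSpec)] (by simp) (by simpa using hAne)
      Θa m0a V M1 d0a (by
        intro s' hs'
        rw [List.mem_singleton] at hs'
        subst hs'
        exact dM.eqv (ctxEq_refl _) eA)
    have dB := appE_list [((Δ₂, m₂, pB) : AppSpec)] (by simp) (by simpa using hBne)
      Θb m0b V N1 d0b (by
        intro s' hs'
        rw [List.mem_singleton] at hs'
        subst hs'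
        exact dN.eqv (ctxEq_refl _) eB)
    refine ⟨_, (Deriv.parI dA dB).eqv ?_ ?_, ?_⟩
    · refine ctxEq_trans (ctxEq_interchange _ _ _ _) ?_
      refine ctxEq_trans (ctxEq_tens hceΘ ?_) hctx
      intro x
      refine CEq.trans (CEq.tensCongr (CEq.unit _) (CEq.unit _)) ?_
      exact (hcpar x).trans (CEq.unit (s.1 x)).symm
    · refine PEq.trans ?_ hout
      show PEq (.par (parList (pA.map Prod.snd)) (parList (pB.map Prod.snd)))
        (parList (s.2.2.map Prod.snd))
      refine PEq.trans (peq_parList_append (by simp [hAne]) (by simp [hBne])).symm ?_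
      rw [← List.map_append]
      exact peq_parList_perm (hq.map _).symm
    · have e0 : specsMsSum [s] = s.2.1 := by simp [specsMsSum]
      have e1 : specsT [s] = 2 * s.2.2.length := by simp [specsT]
      have e2 : s.2.2.length = pA.length + pB.length := by
        have := hq.length_eq
        simpa using this
      have e3 : 0 < pA.length := List.length_pos_iff.mpr hAne
      have e4 : 0 < pB.length := List.length_pos_iff.mpr hBne
      have e5 : specsMsSum [((Δ₁, m₁, pA) : AppSpec)] = m₁ := by simp [specsMsSum]
      have e6 : specsMsSum [((Δ₂, m₂, pB) : AppSpec)] = m₂ := by simp [specsMsSum]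
      have e7 : specsT [((Δ₁, m₁, pA) : AppSpec)] = 2 * pA.length := by simp [specsT]
      have e8 : specsT [((Δ₂, m₂, pB) : AppSpec)] = 2 * pB.length := by simp [specsT]
      rw [e5, e7, e6, e8]
      omega
  | parL N' hstep ih =>
    intro hb Γ α m hd
    obtain ⟨Δ₁, Δ₂, β₁, β₂, m₁, m₂, dM, dN, hcpar, hppar, rfl⟩ := deriv_par_inv hd
    obtain ⟨m₁', d', rfl⟩ := ih hb dM
    exact ⟨m₁' + m₂, (Deriv.parI d' dN).eqv hcpar hppar, by omega⟩
  | parR M' hstep ih =>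
    intro hb Γ α m hd
    obtain ⟨Δ₁, Δ₂, β₁, β₂, m₁, m₂, dM, dN, hcpar, hppar, rfl⟩ := deriv_par_inv hd
    obtain ⟨m₂', d', rfl⟩ := ih hb dN
    exact ⟨m₁ + m₂', (Deriv.parI dM d').eqv hcpar hppar, by omega⟩
  | appL N' hstep hnp ih =>
    intro hb Γ α m hd
    obtain ⟨Δ, specs, m0, hne, harr, hM, hN, hctx, hout, hm⟩ := deriv_app_inv hd
    obtain ⟨m0', dM', rfl⟩ := ih hb hM
    have dv := appE_list specs hne harr Δ m0' _ N' dM' hN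
    refine ⟨_, dv.eqv hctx hout, ?_⟩
    have := specsT_pos hne harr
    omega
  | @appR b' M1 M1' V hV hstep hnp ih =>
    intro hb Γ α m hd
    obtain ⟨Δ, specs, m0, hne, harr, hM, hN, hctx, hout, hm⟩ := deriv_app_inv hd
    obtain ⟨s, rfl⟩ := value_major_single hV hM hne
    obtain ⟨m1', d', he⟩ := ih hb (hN s (by simp))
    have dv := appE_list [((s.1, m1', s.2.2) : AppSpec)] (by simp)
      (by simpa using harr s (by simp)) Δ m0 V M1' hM (by
        intro s' hs'
        rw [List.mem_singleton] at hs'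
        subst hs'
        exact d')
    refine ⟨_, dv.eqv hctx hout, ?_⟩
    have e0 : specsMsSum [s] = s.2.1 := by simp [specsMsSum]
    have e1 : specsMsSum [((s.1, m1', s.2.2) : AppSpec)] = m1' := by simp [specsMsSum]
    have e2 : specsT [((s.1, m1', s.2.2) : AppSpec)] = specsT [s] := by simp [specsT]
    have e3 : 2 ≤ specsT [s] := specsT_pos (by simp) (by simpa using harr s (by simp))
    rw [e1, e2]
    omega
  | plusL M1 N1 => intro hb; exact Bool.noConfusion hb
  | plusR M1 N1 => intro hb; exact Bool.noConfusion hb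

end SRMain

section SRPlus

theorem plus_sr : ∀ {M N₁ N₂}, PlusPair M N₁ N₂ → ∀ {Γ α m}, Deriv Γ M α m →
    ∃ m', (Deriv Γ N₁ α m' ∨ Deriv Γ N₂ α m') ∧ m = m' + 1 := by
  intro M N₁ N₂ hpp
  induction hpp with
  | base M N =>
    intro Γ α m hd
    obtain ⟨m', he, hd'⟩ := deriv_plus_inv hd
    exact ⟨m', hd', he⟩
  | parL N hpp ih =>
    intro Γ α m hd
    obtain ⟨Δ₁, Δ₂, β₁, β₂, m₁, m₂, dM, dN, hcpar, hppar, rfl⟩ := deriv_par_inv hd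
    obtain ⟨m₁', hd', rfl⟩ := ih dM
    refine ⟨m₁' + m₂, ?_, by omega⟩
    rcases hd' with d | d
    · exact .inl ((Deriv.parI d dN).eqv hcpar hppar)
    · exact .inr ((Deriv.parI d dN).eqv hcpar hppar)
  | parR M hpp ih =>
    intro Γ α m hd
    obtain ⟨Δ₁, Δ₂, β₁, β₂, m₁, m₂, dM, dN, hcpar, hppar, rfl⟩ := deriv_par_inv hd
    obtain ⟨m₂', hd', rfl⟩ := ih dN
    refine ⟨m₁ + m₂', ?_, by omega⟩
    rcases hd' with d | d
    · exact .inl ((Deriv.parI dM d).eqv hcpar hppar)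
    · exact .inr ((Deriv.parI dM d).eqv hcpar hppar)
  | appL N hpp hnp ih =>
    intro Γ α m hd
    obtain ⟨Δ, specs, m0, hne, harr, hM, hN, hctx, hout, hm⟩ := deriv_app_inv hd
    obtain ⟨m0', hd', rfl⟩ := ih hM
    have hT := specsT_pos hne harr
    refine ⟨m0' + specsMsSum specs + specsT specs - 1, ?_, by omega⟩
    rcases hd' with d | d
    · exact .inl ((appE_list specs hne harr Δ m0' _ N d hN).eqv hctx hout)
    · exact .inr ((appE_list specs hne harr Δ m0' _ N d hN).eqv hctx hout)
  | @appR M1 M2 M3 V hV hpp hnp ih =>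
    intro Γ α m hd
    obtain ⟨Δ, specs, m0, hne, harr, hM, hN, hctx, hout, hm⟩ := deriv_app_inv hd
    obtain ⟨s, rfl⟩ := value_major_single hV hM hne
    obtain ⟨m1', hd', he⟩ := ih (hN s (by simp))
    have e0 : specsMsSum [s] = s.2.1 := by simp [specsMsSum]
    have e1 : specsMsSum [((s.1, m1', s.2.2) : AppSpec)] = m1' := by simp [specsMsSum]
    have e2 : specsT [((s.1, m1', s.2.2) : AppSpec)] = specsT [s] := by simp [specsT]
    have e3 : 2 ≤ specsT [s] := specsT_pos (by simp) (by simpa using harr s (by simp))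
    refine ⟨m0 + m1' + specsT [s] - 1, ?_, by omega⟩
    have build : ∀ {W : Tm}, Deriv s.1 W (minorTy s) m1' →
        Deriv Γ (.app V W) α (m0 + m1' + specsT [s] - 1) := by
      intro W d
      have dv := appE_list [((s.1, m1', s.2.2) : AppSpec)] (by simp)
        (by simpa using harr s (by simp)) Δ m0 V W hM (by
          intro s' hs'
          rw [List.mem_singleton] at hs'
          subst hs'
          exact d)
      rw [e1, e2] at dv
      exact dv.eqv hctx hout
    rcases hd' with d | d
    · exact .inl (build d)
    · exact .inr (build d)

end SRPlus

theorem subject_reduction (Δ : Ctx) (M : Tm) (α : PTy) (m : ℕ)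
    (hπ : Deriv Δ M α m) :
    (∀ N, Step false M N → ∃ m', Deriv Δ N α m' ∧ m = m' + 1) ∧
    (∀ N₁ N₂, PlusPair M N₁ N₂ →
      ∃ m', (Deriv Δ N₁ α m' ∨ Deriv Δ N₂ α m') ∧ m = m' + 1) :=
  ⟨fun _ h => step_sr h rfl hπ, fun _ _ h => plus_sr h hπ⟩
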